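/- arXiv:1301.0126 — 7 statements merged into one kernel-verified Lean document; each statement's English description precedes it below -/
import Mathlib

section
/- For every integer k with 1 ≤ k ≤ l, the greatest common divisor of ω_0, ω_1, …, ω_k equals p_{k+1}·p_{k+2}⋯p_{l+1}. -/
/-- Let `l ≥ 0` and let `(q 1, p 1), …, (q (l+1), p (l+1))` be the formal
Puiseux pairs (`p k ≥ 2` and `gcd (q k) (p k) = 1` for `1 ≤ k ≤ l`, `p (l+1) ≥ 1` and
`gcd (q (l+1)) (p (l+1)) = 1`).  Define `ω 0 = p 1 ⋯ p (l+1)`, `ω 1 = q 1 · p 2 ⋯ p (l+1)`,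
and `ω (k+1) = p k · ω k + (q (k+1) − q k · p (k+1)) · p (k+2) ⋯ p (l+1)` for `1 ≤ k ≤ l`.
Then for every `k` with `1 ≤ k ≤ l`, `gcd (ω 0, …, ω k) = p (k+1) ⋯ p (l+1)`. -/
theorem stmt0 (l : ℕ) (q p : ℕ → ℤ)
    (hp2 : ∀ k, 1 ≤ k → k ≤ l → 2 ≤ p k)
    (hpl1 : 1 ≤ p (l + 1))
    (hcop : ∀ k, 1 ≤ k → k ≤ l + 1 → Int.gcd (q k) (p k) = 1)
    (ω : ℕ → ℤ)
    (hω0 : ω 0 = ∏ i ∈ Finset.Icc 1 (l + 1), p i)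
    (hω1 : ω 1 = q 1 * ∏ i ∈ Finset.Icc 2 (l + 1), p i)
    (hωrec : ∀ k, 1 ≤ k → k ≤ l →
      ω (k + 1) = p k * ω k + (q (k + 1) - q k * p (k + 1)) * ∏ i ∈ Finset.Icc (k + 2) (l + 1), p i)
    (k : ℕ) (hk1 : 1 ≤ k) (hkl : k ≤ l) :
    (Finset.range (k + 1)).gcd ω = ∏ i ∈ Finset.Icc (k + 1) (l + 1), p i := by
  -- positivity of the products
  have hPpos : ∀ m : ℕ, 0 < ∏ i ∈ Finset.Icc (m + 1) (l + 1), p i := by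
    intro m
    apply Finset.prod_pos
    intro i hi
    simp only [Finset.mem_Icc] at hi
    rcases eq_or_lt_of_le hi.2 with h | h
    · rw [h]; exact lt_of_lt_of_le one_pos hpl1
    · exact lt_of_lt_of_le zero_lt_two (hp2 i (by omega) (by omega))
  -- splitting off the bottom of the product
  have hsplit : ∀ a b : ℕ, a ≤ b →
      ∏ i ∈ Finset.Icc a b, p i = p a * ∏ i ∈ Finset.Icc (a + 1) b, p i := by
    intro a b hab
    have h1 : Finset.Icc a b = insert a (Finset.Icc (a + 1) b) := by
      ext x
      simp only [Finset.mem_Icc, Finset.mem_insert]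
      omega
    rw [h1, Finset.prod_insert (by simp)]
  have hgcd1 : ∀ a b : ℤ, Int.gcd a b = 1 → gcd a b = 1 := by
    intro a b h
    rw [← Int.coe_gcd, h, Nat.cast_one]
  -- induction
  revert hkl
  induction k, hk1 using Nat.le_induction with
  | base =>
    intro hkl
    have h0 : ω 0 = p 1 * ∏ i ∈ Finset.Icc 2 (l + 1), p i := by
      rw [hω0, hsplit 1 (l + 1) (by omega)]
    rw [show (1 : ℕ) + 1 = 2 from rfl, Finset.range_add_one, Finset.gcd_insert,
      Finset.range_one, Finset.gcd_singleton,
      Int.normalize_of_nonneg (by rw [hω0]; exact le_of_lt (by simpa using hPpos 0)),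
      h0, hω1, gcd_mul_right, hgcd1 _ _ (hcop 1 le_rfl (by omega)), one_mul,
      Int.normalize_of_nonneg (hPpos 1).le]
  | succ k hk IH =>
    intro hkl
    have IHk := IH (by omega)
    rw [Finset.range_add_one, Finset.gcd_insert, IHk]
    have hdvd : (∏ i ∈ Finset.Icc (k + 1) (l + 1), p i) ∣ ω k := by
      rw [← IHk]
      exact Finset.gcd_dvd (Finset.mem_range.mpr (by omega))
    obtain ⟨m, hm⟩ := hdvd
    have hPk : ∏ i ∈ Finset.Icc (k + 1) (l + 1), p i
        = p (k + 1) * ∏ i ∈ Finset.Icc (k + 2) (l + 1), p i := hsplit (k + 1) (l + 1) (by omega)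
    have hω' : ω (k + 1) = (q (k + 1) + p (k + 1) * (p k * m - q k))
        * ∏ i ∈ Finset.Icc (k + 2) (l + 1), p i := by
      rw [hωrec k hk (by omega), hm, hPk]; ring
    rw [hω', hPk, gcd_mul_right]
    have hco : IsCoprime (q (k + 1) + p (k + 1) * (p k * m - q k)) (p (k + 1)) :=
      (Int.isCoprime_iff_gcd_eq_one.mpr (hcop (k + 1) (by omega) (by omega))).add_mul_left_left _
    rw [hgcd1 _ _ (Int.isCoprime_iff_gcd_eq_one.mp hco), one_mul,
      Int.normalize_of_nonneg (hPpos (k + 1)).le]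
end

section
/- For every integer k with 1 ≤ k ≤ l+1, the least positive integer α such that α·ω_k lies in the subgroup ℤω_0 + ℤω_1 + ⋯ + ℤω_{k−1} of ℤ equals p_k. -/
/-- With the `ω`'s defined from the formal Puiseux pairs as in the context,
for every `k` with `1 ≤ k ≤ l + 1`, the least positive integer `α` such that
`α · ω k ∈ ℤ ω 0 + ℤ ω 1 + ⋯ + ℤ ω (k-1)` equals `p k`. -/
theorem stmt2 (l : ℕ) (q p : ℕ → ℤ)
    (hp2 : ∀ k, 1 ≤ k → k ≤ l → 2 ≤ p k)
    (hpl1 : 1 ≤ p (l + 1))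
    (hcop : ∀ k, 1 ≤ k → k ≤ l + 1 → Int.gcd (q k) (p k) = 1)
    (ω : ℕ → ℤ)
    (hω0 : ω 0 = ∏ i ∈ Finset.Icc 1 (l + 1), p i)
    (hω1 : ω 1 = q 1 * ∏ i ∈ Finset.Icc 2 (l + 1), p i)
    (hωrec : ∀ k, 1 ≤ k → k ≤ l →
      ω (k + 1) = p k * ω k + (q (k + 1) - q k * p (k + 1)) * ∏ i ∈ Finset.Icc (k + 2) (l + 1), p i)
    (k : ℕ) (hk1 : 1 ≤ k) (hkl : k ≤ l + 1) :
    IsLeast {α : ℤ | 0 < α ∧ ∃ cf : ℕ → ℤ,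
      α * ω k = ∑ i ∈ Finset.range k, cf i * ω i} (p k) := by
  set e : ℕ → ℤ := fun n => ∏ i ∈ Finset.Icc (n + 1) (l + 1), p i with he
  have ppos : ∀ i, 1 ≤ i → i ≤ l + 1 → (0:ℤ) < p i := by
    intro i h1 h2
    rcases Nat.lt_or_ge i (l+1) with h | h
    · have := hp2 i h1 (Nat.lt_succ_iff.mp h); linarith
    · have : i = l + 1 := le_antisymm h2 h
      subst this; linarith
  have epos : ∀ n, 0 < e n := by
    intro n
    apply Finset.prod_pos
    intro i hi
    simp only [Finset.mem_Icc] at hi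
    exact ppos i (by omega) hi.2
  have esplit : ∀ n, n ≤ l → e n = p (n + 1) * e (n + 1) := by
    intro n hn
    have h1 : Finset.Icc (n+1) (l+1) = Finset.Ico (n+1) (l+2) := by
      rw [← Finset.Ico_add_one_right_eq_Icc]; rfl
    have h2 : Finset.Icc (n+1+1) (l+1) = Finset.Ico (n+1+1) (l+2) := by
      rw [← Finset.Ico_add_one_right_eq_Icc]; rfl
    simp only [he, h1, h2]
    exact Finset.prod_eq_prod_Ico_succ_bot (by omega) p
  have key : ∀ n, n ≤ l →
      (∃ cf : ℕ → ℤ, ∑ i ∈ Finset.range (n+1), cf i * ω i = e n) ∧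
      (∀ i, i ≤ n → e n ∣ ω i) ∧
      (∃ m, ω (n+1) = e (n+1) * m ∧ IsCoprime m (p (n+1))) := by
    intro n
    induction n with
    | zero =>
      intro _
      have he0 : ω 0 = e 0 := by simpa [he] using hω0
      refine ⟨⟨fun _ => 1, by simpa using he0⟩, ?_, q 1, ?_, ?_⟩
      · intro i hi
        interval_cases i
        exact dvd_of_eq he0.symm
      · rw [hω1]; simp [he]; ring
      · rw [Int.isCoprime_iff_gcd_eq_one]
        exact hcop 1 le_rfl (by omega)
    | succ n ih =>
      intro hn
      obtain ⟨⟨cf, hcf⟩, hdvd, m, hm, hcop'⟩ := ih (by omega)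
      have hsplit := esplit n (by omega)
      obtain ⟨a, b, hab⟩ := hcop'
      have part1 : ∃ cf' : ℕ → ℤ,
          ∑ i ∈ Finset.range (n+1+1), cf' i * ω i = e (n+1) := by
        refine ⟨fun i => if i = n+1 then a else b * cf i, ?_⟩
        rw [Finset.sum_range_succ]
        have hcong : ∀ i ∈ Finset.range (n+1),
            (if i = n+1 then a else b * cf i) * ω i = b * (cf i * ω i) := by
          intro i hi
          simp only [Finset.mem_range] at hi
          rw [if_neg (by omega)]; ring
        rw [Finset.sum_congr rfl hcong, ← Finset.mul_sum, hcf]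
        have hbeta : (fun i => if i = n+1 then a else b * cf i) (n+1) = a := by simp
        rw [hbeta, hm]
        calc b * e n + a * (e (n+1) * m) = e (n+1) * (a * m + b * p (n+1)) := by
              rw [hsplit]; ring
          _ = e (n+1) := by rw [hab, mul_one]
      have part2 : ∀ i, i ≤ n+1 → e (n+1) ∣ ω i := by
        intro i hi
        rcases Nat.lt_or_ge i (n+1) with h | h
        · exact dvd_trans ⟨p (n+1), by rw [hsplit]; ring⟩ (hdvd i (by omega))
        · have : i = n+1 := by omega
          subst this; exact ⟨m, hm⟩
      refine ⟨part1, part2, ?_⟩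
      have hrec := hωrec (n+1) (by omega) hn
      have hsplit2 := esplit (n+1) hn
      refine ⟨p (n+1) * p (n+1+1) * m + (q (n+1+1) - q (n+1) * p (n+1+1)), ?_, ?_⟩
      · rw [hrec, hm]
        have hpe : (∏ i ∈ Finset.Icc (n+1+2) (l+1), p i) = e (n+1+1) := by
          simp [he]
        rw [hpe, hsplit2]
        ring
      · have hc : IsCoprime (q (n+1+1)) (p (n+1+1)) := by
          rw [Int.isCoprime_iff_gcd_eq_one]
          exact hcop (n+1+1) (by omega) (by omega)
        have h2 := hc.add_mul_left_left (p (n+1) * m - q (n+1))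
        convert h2 using 1
        · rfl
        ring
  obtain ⟨n, rfl⟩ : ∃ n, k = n + 1 := ⟨k - 1, by omega⟩
  obtain ⟨⟨cf, hcf⟩, hdvd, m, hm, hcopm⟩ := key n (by omega)
  have hsplit := esplit n (by omega)
  have hpk : 0 < p (n+1) := ppos (n+1) (by omega) (by omega)
  constructor
  · refine ⟨hpk, fun i => m * cf i, ?_⟩
    rw [hm]
    calc p (n+1) * (e (n+1) * m) = m * e n := by rw [hsplit]; ring
      _ = m * ∑ i ∈ Finset.range (n+1), cf i * ω i := by rw [hcf]
      _ = ∑ i ∈ Finset.range (n+1), m * cf i * ω i := by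
          rw [Finset.mul_sum]; apply Finset.sum_congr rfl; intro i _; ring
  · rintro α ⟨hα, cf', hcf'⟩
    have hdvd' : e n ∣ α * ω (n+1) := by
      rw [hcf']
      apply Finset.dvd_sum
      intro i hi
      simp only [Finset.mem_range] at hi
      exact Dvd.dvd.mul_left (hdvd i (by omega)) _
    rw [hm, hsplit] at hdvd'
    have hne : e (n+1) ≠ 0 := (epos (n+1)).ne'
    have hpm : p (n+1) ∣ α * m := by
      have h2 : e (n+1) * p (n+1) ∣ e (n+1) * (α * m) := by
        have e1 : e (n+1) * p (n+1) = p (n+1) * e (n+1) := by ring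
        have e2 : e (n+1) * (α * m) = α * (e (n+1) * m) := by ring
        rw [e1, e2]; exact hdvd'
      exact (mul_dvd_mul_iff_left hne).mp h2
    have hpd : p (n+1) ∣ α := (hcopm.symm).dvd_of_dvd_mul_right hpm
    exact Int.le_of_dvd hα hpd
end

section
/- For every polynomial f ∈ K[y] there exists a unique multivariate polynomial F ∈ K[y_1,…,y_k] such that substituting y_j = f_j for all j yields F(f_1,…,f_k) = f, and such that for each j with 1 ≤ j ≤ k−1 the degree of F in the variable y_j is strictly less than p_j. -/
/-- Let `K` be a field, `k ≥ 1`, `p 0 = 1` and `p 1, …, p (k-1)` positive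
integers; set `d j := p 0 · p 1 ⋯ p (j-1)`.  Let `f 1, …, f k ∈ K[y]` be monic of degrees
`d 1, …, d k` (here `f` is indexed by `Fin k`, with `f j` monic of degree
`d (j+1) = ∏_{i ≤ j} p i`).  Then for every polynomial `g ∈ K[y]` there is a unique
multivariate polynomial `F ∈ K[y₁,…,y_k]` with `F (f 1, …, f k) = g` whose degree in the
variable `y_j` is `< p j` for each `1 ≤ j ≤ k - 1`. -/
theorem stmt6 (K : Type*) [Field K] (k : ℕ) (hk : 1 ≤ k)
    (p : ℕ → ℕ) (hp0 : p 0 = 1)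
    (hp : ∀ j, 1 ≤ j → j ≤ k - 1 → 0 < p j)
    (f : Fin k → Polynomial K)
    (hf : ∀ j : Fin k, (f j).Monic ∧ (f j).natDegree = ∏ i ∈ Finset.range ((j : ℕ) + 1), p i)
    (g : Polynomial K) :
    ∃! F : MvPolynomial (Fin k) K,
      MvPolynomial.aeval f F = g ∧
      ∀ j : Fin k, (j : ℕ) + 1 < k → MvPolynomial.degreeOf j F < p ((j : ℕ) + 1) := by
  classical
  set D : ℕ → ℕ := fun j => ∏ i ∈ Finset.range (j + 1), p i with hD
  have hD0 : D 0 = 1 := by simp [hD, hp0]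
  have hDs : ∀ j, D (j + 1) = D j * p (j + 1) := by
    intro j; simp [hD, Finset.prod_range_succ]
  have hfd : ∀ j : Fin k, (f j).natDegree = D (j : ℕ) := fun j => (hf j).2
  -- the weight of an exponent vector
  set w : (Fin k →₀ ℕ) → ℕ := fun e => ∑ j : Fin k, e j * D (j : ℕ) with hw
  -- converting Fin-indexed sums to range sums
  have convS : ∀ (E : Fin k → ℕ),
      ∑ j : Fin k, E j * D (j : ℕ)
        = ∑ i ∈ Finset.range k, (if h : i < k then E ⟨i, h⟩ else 0) * D i := by
    intro E
    rw [← Fin.sum_univ_eq_sum_range (fun i => (if h : i < k then E ⟨i, h⟩ else 0) * D i) k]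
    exact Finset.sum_congr rfl fun j _ => by simp [j.isLt]
  -- key bound: a sum of digits below position m is < D m
  have key_lt : ∀ (E : ℕ → ℕ) (m : ℕ), m ≤ k - 1 → (∀ j, j < m → E j < p (j + 1)) →
      ∑ j ∈ Finset.range m, E j * D j < D m := by
    intro E m
    induction m with
    | zero => intro _ _; simp [hD0]
    | succ m ih =>
      intro hm hE
      rw [Finset.sum_range_succ]
      have h1 : ∑ j ∈ Finset.range m, E j * D j < D m :=
        ih (by omega) (fun j hj => hE j (by omega))
      have h2 : E m + 1 ≤ p (m + 1) := hE m (by omega)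
      calc ∑ j ∈ Finset.range m, E j * D j + E m * D m
          < D m + E m * D m := by omega
        _ = (E m + 1) * D m := by ring
        _ ≤ p (m + 1) * D m := Nat.mul_le_mul_right _ h2
        _ = D (m + 1) := by rw [hDs m]; ring
  -- strict monotonicity step
  have step : ∀ (e e' : Fin k →₀ ℕ),
      (∀ j : Fin k, (j : ℕ) + 1 < k → e j < p ((j : ℕ) + 1)) →
      ∀ j0 : Fin k, (∀ j : Fin k, j0 < j → e j = e' j) → e j0 < e' j0 → w e < w e' := by
    intro e e' he j0 htail hlt
    have hsplit : ∀ (a : Fin k →₀ ℕ), w a =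
        ∑ i ∈ Finset.range (j0 : ℕ), (if h : i < k then a ⟨i, h⟩ else 0) * D i
          + a j0 * D (j0 : ℕ)
          + ∑ i ∈ Finset.Ico ((j0 : ℕ) + 1) k, (if h : i < k then a ⟨i, h⟩ else 0) * D i := by
      intro a
      rw [hw]
      simp only
      rw [convS (fun j => a j)]
      rw [Finset.range_eq_Ico,
        ← Finset.sum_Ico_consecutive _ (Nat.zero_le ((j0 : ℕ) + 1)) (by omega : (j0 : ℕ) + 1 ≤ k),
        ← Finset.range_eq_Ico, Finset.sum_range_succ]
      simp [j0.isLt]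
    have htailEq : ∑ i ∈ Finset.Ico ((j0 : ℕ) + 1) k, (if h : i < k then e ⟨i, h⟩ else 0) * D i
        = ∑ i ∈ Finset.Ico ((j0 : ℕ) + 1) k, (if h : i < k then e' ⟨i, h⟩ else 0) * D i := by
      refine Finset.sum_congr rfl fun i hi => ?_
      rw [Finset.mem_Ico] at hi
      rw [dif_pos hi.2, dif_pos hi.2, htail ⟨i, hi.2⟩ (by simpa [Fin.lt_def] using hi.1)]
    have hA : ∑ i ∈ Finset.range (j0 : ℕ), (if h : i < k then e ⟨i, h⟩ else 0) * D i
        < D (j0 : ℕ) := by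
      apply key_lt _ _ (by have := j0.isLt; omega)
      intro i hi
      rw [dif_pos (by omega : i < k)]
      exact he ⟨i, by omega⟩ (by simp; omega)
    have h3 : e j0 * D (j0 : ℕ) + D (j0 : ℕ) ≤ e' j0 * D (j0 : ℕ) := by
      calc e j0 * D (j0 : ℕ) + D (j0 : ℕ) = (e j0 + 1) * D (j0 : ℕ) := by ring
        _ ≤ e' j0 * D (j0 : ℕ) := Nat.mul_le_mul_right _ hlt
    rw [hsplit e, hsplit e', htailEq]
    have hA' : 0 ≤ ∑ i ∈ Finset.range (j0 : ℕ), (if h : i < k then e' ⟨i, h⟩ else 0) * D i :=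
      Nat.zero_le _
    omega
  -- injectivity of the weight map on constrained exponents
  have winj : ∀ e e' : Fin k →₀ ℕ,
      (∀ j : Fin k, (j : ℕ) + 1 < k → e j < p ((j : ℕ) + 1)) →
      (∀ j : Fin k, (j : ℕ) + 1 < k → e' j < p ((j : ℕ) + 1)) →
      w e = w e' → e = e' := by
    intro e e' he he' hww
    by_contra hne
    have hs : (Finset.univ.filter fun j : Fin k => e j ≠ e' j).Nonempty := by
      by_contra h
      rw [Finset.not_nonempty_iff_eq_empty, Finset.filter_eq_empty_iff] at h
      exact hne (Finsupp.ext fun j => by simpa using h (Finset.mem_univ j))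
    set s := Finset.univ.filter fun j : Fin k => e j ≠ e' j with hsdef
    have hsne : s.Nonempty := hs
    have hmem : s.max' hsne ∈ s := s.max'_mem hsne
    set m := s.max' hsne with hm
    have hmne : e m ≠ e' m := by
      have := hmem; rw [hsdef, Finset.mem_filter] at this; exact this.2
    have htail : ∀ j : Fin k, m < j → e j = e' j := by
      intro j hj
      by_contra hc
      have : j ∈ s := by rw [hsdef, Finset.mem_filter]; exact ⟨Finset.mem_univ _, hc⟩
      exact absurd (s.le_max' j this) (not_le.mpr hj)
    rcases lt_trichotomy (e m) (e' m) with h | h | h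
    · exact absurd hww (Nat.ne_of_lt (step e e' he m htail h))
    · exact hmne h
    · exact absurd hww.symm (Nat.ne_of_lt (step e' e he' m (fun j hj => (htail j hj).symm) h))
  -- surjectivity: mixed radix digits
  have digits : ∀ (n m : ℕ), m ≤ k - 1 →
      (∑ i ∈ Finset.range m, ((n / D i) % p (i + 1)) * D i) + (n / D m) * D m = n := by
    intro n m
    induction m with
    | zero => intro _; simp [hD0]
    | succ m ih =>
      intro hm
      rw [Finset.sum_range_succ]
      have h1 := ih (by omega)
      have h2 : n / D (m + 1) = (n / D m) / p (m + 1) := by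
        rw [hDs, Nat.div_div_eq_div_mul]
      have h3 : (n / D m) % p (m + 1) * D m + (n / D (m + 1)) * D (m + 1)
          = (n / D m) * D m := by
        rw [h2, hDs]
        calc (n / D m) % p (m + 1) * D m + (n / D m) / p (m + 1) * (D m * p (m + 1))
            = ((n / D m) % p (m + 1) + p (m + 1) * ((n / D m) / p (m + 1))) * D m := by ring
          _ = (n / D m) * D m := by rw [Nat.mod_add_div]
      rw [add_assoc, h3, h1]
  have wsurj : ∀ n : ℕ, ∃ e : Fin k →₀ ℕ,
      (∀ j : Fin k, (j : ℕ) + 1 < k → e j < p ((j : ℕ) + 1)) ∧ w e = n := by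
    intro n
    set E : Fin k → ℕ := fun j =>
      if (j : ℕ) + 1 < k then (n / D (j : ℕ)) % p ((j : ℕ) + 1) else n / D (j : ℕ) with hE
    have hEcoe : ∀ j : Fin k, (Finsupp.equivFunOnFinite.symm E) j = E j := fun _ => rfl
    refine ⟨Finsupp.equivFunOnFinite.symm E, ?_, ?_⟩
    · intro j hj
      rw [hEcoe]
      simp only [hE, if_pos hj]
      exact Nat.mod_lt _ (hp ((j : ℕ) + 1) (by omega) (by omega))
    · rw [hw]
      simp only
      calc ∑ j : Fin k, (Finsupp.equivFunOnFinite.symm E) j * D (j : ℕ)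
          = ∑ j : Fin k, E j * D (j : ℕ) :=
            Finset.sum_congr rfl fun j _ => by rw [hEcoe]
        _ = ∑ i ∈ Finset.range k, (if h : i < k then E ⟨i, h⟩ else 0) * D i := convS E
        _ = n := by
            have hr : Finset.range ((k - 1) + 1) = Finset.range k :=
              congrArg Finset.range (by omega)
            rw [← hr, Finset.sum_range_succ]
            have hlast : (if h : k - 1 < k then E ⟨k - 1, h⟩ else 0) = n / D (k - 1) := by
              rw [dif_pos (by omega)]
              simp only [hE]
              rw [if_neg (by omega)]
            have hrest : ∀ i ∈ Finset.range (k - 1),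
                (if h : i < k then E ⟨i, h⟩ else 0) * D i
                  = ((n / D i) % p (i + 1)) * D i := by
              intro i hi
              rw [Finset.mem_range] at hi
              rw [dif_pos (by omega)]
              simp only [hE]
              rw [if_pos (by omega)]
            rw [Finset.sum_congr rfl hrest, hlast]
            exact digits n (k - 1) le_rfl
  -- monic products
  have hM : ∀ e : Fin k →₀ ℕ, (∏ j, f j ^ e j).Monic :=
    fun e => Polynomial.monic_prod_of_monic _ _ fun j _ => ((hf j).1).pow _
  have hMdeg : ∀ e : Fin k →₀ ℕ, (∏ j, f j ^ e j).natDegree = w e := by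
    intro e
    rw [Polynomial.natDegree_prod_of_monic _ _ (fun j _ => ((hf j).1).pow _), hw]
    exact Finset.sum_congr rfl fun j _ => by rw [(hf j).1.natDegree_pow, hfd]
  have haevalm : ∀ (e : Fin k →₀ ℕ) (c : K),
      MvPolynomial.aeval f (MvPolynomial.monomial e c) = Polynomial.C c * ∏ j, f j ^ e j := by
    intro e c
    rw [MvPolynomial.aeval_monomial, Polynomial.algebraMap_eq]
    congr 1
    exact Finsupp.prod_fintype _ _ fun j => pow_zero _
  have hcons_of : ∀ (F : MvPolynomial (Fin k) K),
      (∀ j : Fin k, (j : ℕ) + 1 < k → MvPolynomial.degreeOf j F < p ((j : ℕ) + 1)) →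
      ∀ e ∈ F.support, ∀ j : Fin k, (j : ℕ) + 1 < k → e j < p ((j : ℕ) + 1) :=
    fun F hFc e he j hj =>
      lt_of_le_of_lt (MvPolynomial.monomial_le_degreeOf j he) (hFc j hj)
  -- a constrained polynomial evaluating to zero is zero
  have zero_of : ∀ F : MvPolynomial (Fin k) K,
      (∀ j : Fin k, (j : ℕ) + 1 < k → MvPolynomial.degreeOf j F < p ((j : ℕ) + 1)) →
      MvPolynomial.aeval f F = 0 → F = 0 := by
    intro F hFc hF0
    by_contra hF
    have hsupp : F.support.Nonempty := by
      rwa [Finset.nonempty_iff_ne_empty, Ne, MvPolynomial.support_eq_empty]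
    obtain ⟨e0, he0, hmax⟩ := Finset.exists_max_image F.support w hsupp
    have hrepr : MvPolynomial.aeval f F
        = ∑ e ∈ F.support, Polynomial.C (F.coeff e) * ∏ j, f j ^ e j := by
      conv_lhs => rw [F.as_sum]
      rw [map_sum]
      exact Finset.sum_congr rfl fun e _ => haevalm e _
    have hcoeff : Polynomial.coeff (MvPolynomial.aeval f F) (w e0) = F.coeff e0 := by
      rw [hrepr, Polynomial.finset_sum_coeff, Finset.sum_eq_single e0]
      · rw [Polynomial.coeff_C_mul]
        have h1 : (∏ j, f j ^ e0 j).coeff (w e0) = 1 := by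
          rw [← hMdeg e0]; exact (hM e0).coeff_natDegree
        rw [h1, mul_one]
      · intro e he hne
        apply Polynomial.coeff_eq_zero_of_natDegree_lt
        have h1 : (Polynomial.C (F.coeff e) * ∏ j, f j ^ e j).natDegree ≤ w e := by
          calc (Polynomial.C (F.coeff e) * ∏ j, f j ^ e j).natDegree
              ≤ (Polynomial.C (F.coeff e)).natDegree + (∏ j, f j ^ e j).natDegree :=
                Polynomial.natDegree_mul_le
            _ = w e := by rw [Polynomial.natDegree_C, hMdeg, zero_add]
        have h2 : w e ≠ w e0 :=
          fun hww => hne (winj e e0 (hcons_of F hFc e he) (hcons_of F hFc e0 he0) hww)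
        have h3 : w e ≤ w e0 := hmax e he
        omega
      · intro h; exact absurd he0 h
    rw [hF0] at hcoeff
    simp only [Polynomial.coeff_zero] at hcoeff
    exact (MvPolynomial.mem_support_iff.mp he0) hcoeff.symm
  -- existence
  have exist : ∀ (n : ℕ) (g : Polynomial K), g.natDegree ≤ n →
      ∃ F : MvPolynomial (Fin k) K, MvPolynomial.aeval f F = g ∧
        ∀ j : Fin k, (j : ℕ) + 1 < k → MvPolynomial.degreeOf j F < p ((j : ℕ) + 1) := by
    intro n
    induction n with
    | zero =>
      intro g hg
      refine ⟨MvPolynomial.C (g.coeff 0), ?_, ?_⟩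
      · rw [MvPolynomial.aeval_C, Polynomial.algebraMap_eq]
        exact (Polynomial.eq_C_of_natDegree_le_zero hg).symm
      · intro j hj
        rw [MvPolynomial.degreeOf_C]
        exact hp ((j : ℕ) + 1) (by omega) (by omega)
    | succ n ih =>
      intro g hg
      by_cases hgn : g.natDegree ≤ n
      · exact ih g hgn
      have hdeg : g.natDegree = n + 1 := by omega
      have hg0 : g ≠ 0 := by
        intro h; rw [h, Polynomial.natDegree_zero] at hdeg; omega
      have hc0 : g.leadingCoeff ≠ 0 := Polynomial.leadingCoeff_ne_zero.mpr hg0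
      obtain ⟨e, hec, hew⟩ := wsurj (n + 1)
      have hM1 : (∏ j, f j ^ e j).natDegree = n + 1 := by rw [hMdeg, hew]
      have hCM : (Polynomial.C g.leadingCoeff * ∏ j, f j ^ e j).natDegree = n + 1 := by
        rw [Polynomial.natDegree_C_mul hc0, hM1]
      have hCM0 : Polynomial.C g.leadingCoeff * ∏ j, f j ^ e j ≠ 0 := by
        intro h; rw [h, Polynomial.natDegree_zero] at hCM; omega
      have hlc : (Polynomial.C g.leadingCoeff * ∏ j, f j ^ e j).leadingCoeff
          = g.leadingCoeff := by
        rw [Polynomial.leadingCoeff_mul, Polynomial.leadingCoeff_C, (hM e).leadingCoeff,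
          mul_one]
      have hdd : g.degree = (Polynomial.C g.leadingCoeff * ∏ j, f j ^ e j).degree := by
        rw [Polynomial.degree_eq_natDegree hg0, Polynomial.degree_eq_natDegree hCM0, hdeg, hCM]
      have hsub := Polynomial.degree_sub_lt hdd hg0 hlc.symm
      have hdeg' : (g - Polynomial.C g.leadingCoeff * ∏ j, f j ^ e j).natDegree ≤ n := by
        by_cases h0 : g - Polynomial.C g.leadingCoeff * ∏ j, f j ^ e j = 0
        · rw [h0, Polynomial.natDegree_zero]; omega
        · have := Polynomial.natDegree_lt_natDegree h0 hsub
          omega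
      obtain ⟨F', hF'1, hF'2⟩ := ih _ hdeg'
      refine ⟨F' + MvPolynomial.monomial e g.leadingCoeff, ?_, ?_⟩
      · rw [map_add, hF'1, haevalm]
        ring
      · intro j hj
        refine lt_of_le_of_lt (MvPolynomial.degreeOf_add_le _ _ _) (max_lt (hF'2 j hj) ?_)
        rw [MvPolynomial.degreeOf_monomial_eq _ _ hc0]
        exact hec j hj
  obtain ⟨F, hF1, hF2⟩ := exist g.natDegree g le_rfl
  refine ⟨F, ⟨hF1, hF2⟩, ?_⟩
  rintro F' ⟨hF'1, hF'2⟩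
  have hdiff : F' - F = 0 := by
    apply zero_of
    · intro j hj
      have h1 : MvPolynomial.degreeOf j (F' - F)
          ≤ max (MvPolynomial.degreeOf j F') (MvPolynomial.degreeOf j F) := by
        rw [sub_eq_add_neg]
        refine le_trans (MvPolynomial.degreeOf_add_le _ _ _) ?_
        rw [MvPolynomial.degreeOf_neg]
      exact lt_of_le_of_lt h1 (max_lt (hF'2 j hj) (hF2 j hj))
    · rw [map_sub, hF1, hF'1, sub_self]
  exact sub_eq_zero.mp hdiff
end

section
/- Let p_k be a positive integer and let f ∈ K[y] be monic of degree d_k·p_k. Let F ∈ K[y_1,…,y_k] be the unique polynomial with F(f_1,…,f_k) = f and degree in y_j strictly less than p_j for each 1 ≤ j ≤ k−1. Then: (1) F, regarded as a polynomial in y_k, is monic of degree p_k; and (2) for every monomial y_1^{β_1}⋯y_k^{β_k} occurring with nonzero coefficient in F − y_k^{p_k} and every j with 1 ≤ j ≤ k, one has Σ_{i=1}^{j} d_i·β_i < d_{j+1}, where d_{k+1} := d_k·p_k. -/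
private lemma radix_lt (q : ℕ → ℕ) : ∀ (n : ℕ) (a : ℕ → ℕ), (∀ i, i < n → a i < q i) →
    ∑ i ∈ Finset.range n, (∏ t ∈ Finset.range i, q t) * a i < ∏ t ∈ Finset.range n, q t := by
  intro n
  induction n with
  | zero => intro a _; simp
  | succ n ih =>
    intro a ha
    rw [Finset.sum_range_succ, Finset.prod_range_succ]
    have h1 := ih a (fun i hi => ha i (by omega))
    have h2 : a n + 1 ≤ q n := ha n (by omega)
    calc ∑ i ∈ Finset.range n, (∏ t ∈ Finset.range i, q t) * a i
          + (∏ t ∈ Finset.range n, q t) * a n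
        < (∏ t ∈ Finset.range n, q t) + (∏ t ∈ Finset.range n, q t) * a n := by omega
      _ = (∏ t ∈ Finset.range n, q t) * (a n + 1) := by ring
      _ ≤ _ := Nat.mul_le_mul_left _ h2

private lemma radix_inj (q : ℕ → ℕ) : ∀ (n : ℕ) (a b : ℕ → ℕ),
    (∀ i, i < n → a i < q i) → (∀ i, i < n → b i < q i) →
    (∑ i ∈ Finset.range n, (∏ t ∈ Finset.range i, q t) * a i
      = ∑ i ∈ Finset.range n, (∏ t ∈ Finset.range i, q t) * b i) →
    ∀ i, i < n → a i = b i := by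
  intro n
  induction n with
  | zero => intro a b _ _ _ i hi; omega
  | succ n ih =>
    intro a b ha hb h i hi
    rw [Finset.sum_range_succ, Finset.sum_range_succ] at h
    have hA := radix_lt q n a (fun i hi => ha i (by omega))
    have hB := radix_lt q n b (fun i hi => hb i (by omega))
    have hDpos : 0 < ∏ t ∈ Finset.range n, q t := by omega
    have htop : a n = b n := by
      have e1 : (∑ i ∈ Finset.range n, (∏ t ∈ Finset.range i, q t) * a i
          + (∏ t ∈ Finset.range n, q t) * a n) / (∏ t ∈ Finset.range n, q t) = a n := by
        rw [Nat.add_mul_div_left _ _ hDpos, Nat.div_eq_of_lt hA]; omega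
      have e2 : (∑ i ∈ Finset.range n, (∏ t ∈ Finset.range i, q t) * b i
          + (∏ t ∈ Finset.range n, q t) * b n) / (∏ t ∈ Finset.range n, q t) = b n := by
        rw [Nat.add_mul_div_left _ _ hDpos, Nat.div_eq_of_lt hB]; omega
      rw [← e1, ← e2, h]
    rw [htop] at h
    have hsum : ∑ i ∈ Finset.range n, (∏ t ∈ Finset.range i, q t) * a i
        = ∑ i ∈ Finset.range n, (∏ t ∈ Finset.range i, q t) * b i := by omega
    rcases Nat.lt_or_ge i n with h' | h'
    · exact ih a b (fun i hi => ha i (by omega)) (fun i hi => hb i (by omega)) hsum i h'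
    · have : i = n := by omega
      rw [this]; exact htop

private lemma nat_digit_unique {D a b x y : ℕ} (ha : a < D) (hb : b < D)
    (h : a + D * x = b + D * y) : x = y ∧ a = b := by
  have hD : 0 < D := by omega
  have e1 : (a + D * x) / D = x := by rw [Nat.add_mul_div_left _ _ hD, Nat.div_eq_of_lt ha]; omega
  have e2 : (b + D * y) / D = y := by rw [Nat.add_mul_div_left _ _ hD, Nat.div_eq_of_lt hb]; omega
  have hxy : x = y := by rw [← e1, ← e2, h]
  subst hxy; omega

private def dig (k : ℕ) (m : Fin k →₀ ℕ) (i : ℕ) : ℕ :=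
  if h : i < k then m ⟨i, h⟩ else 0

private lemma dig_val {k : ℕ} (m : Fin k →₀ ℕ) (i : Fin k) : dig k m (i : ℕ) = m i :=
  dif_pos i.isLt

private def wt (p : ℕ → ℕ) (k : ℕ) (m : Fin k →₀ ℕ) : ℕ :=
  ∑ i : Fin k, (∏ t ∈ Finset.range ((i : ℕ) + 1), p t) * m i

/-- In the setting of Statement 6 (`K` a field, `k ≥ 1`, `p 0 = 1`,
`p 1, …, p (k-1)` positive, `d j = p 0 ⋯ p (j-1)`, `f j` monic of degree `d (j+1)`), let
`p k` be a positive integer and let `g ∈ K[y]` be monic of degree `d k · p k`.  Let `F` be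
the unique polynomial with `F (f 1, …, f k) = g` and degree in `y_j` less than `p j` for
`1 ≤ j ≤ k - 1`.  Then:
(1) `F`, regarded as a polynomial in `y_k`, is monic of degree `p k` (equivalently,
`F - y_k ^ p k` has degree `< p k` in `y_k`); and
(2) every monomial `y₁^{β₁} ⋯ y_k^{β_k}` occurring in `F - y_k ^ p k` satisfies
`∑_{i=1}^{j} d i · β i < d (j+1)` for every `1 ≤ j ≤ k`, where `d (k+1) := d k · p k`. -/
theorem stmt7 (K : Type*) [Field K] (k : ℕ) (hk : 1 ≤ k)
    (p : ℕ → ℕ) (hp0 : p 0 = 1)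
    (hp : ∀ j, 1 ≤ j → j ≤ k - 1 → 0 < p j) (hpk : 0 < p k)
    (f : Fin k → Polynomial K)
    (hf : ∀ j : Fin k, (f j).Monic ∧ (f j).natDegree = ∏ i ∈ Finset.range ((j : ℕ) + 1), p i)
    (g : Polynomial K) (hg : g.Monic)
    (hgdeg : g.natDegree = (∏ i ∈ Finset.range k, p i) * p k)
    (F : MvPolynomial (Fin k) K)
    (hFeval : MvPolynomial.aeval f F = g)
    (hFdeg : ∀ j : Fin k, (j : ℕ) + 1 < k → MvPolynomial.degreeOf j F < p ((j : ℕ) + 1)) :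
    MvPolynomial.degreeOf (⟨k - 1, by omega⟩ : Fin k)
        (F - MvPolynomial.X (⟨k - 1, by omega⟩ : Fin k) ^ p k) < p k ∧
    ∀ m ∈ (F - MvPolynomial.X (⟨k - 1, by omega⟩ : Fin k) ^ p k).support,
      ∀ j, 1 ≤ j → j ≤ k →
        ∑ i ∈ Finset.univ.filter (fun i : Fin k => (i : ℕ) < j),
            (∏ t ∈ Finset.range ((i : ℕ) + 1), p t) * m i
          < ∏ t ∈ Finset.range (j + 1), p t := by
  classical
  have hkk : k - 1 < k := by omega
  set l : Fin k := ⟨k - 1, hkk⟩ with hl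
  have hppos : ∀ t, t < k → 0 < p t := by
    intro t ht
    rcases Nat.eq_zero_or_pos t with h | h
    · rw [h, hp0]; omega
    · exact hp t h (by omega)
  have hDpos : ∀ i, i < k → 0 < ∏ t ∈ Finset.range (i + 1), p t := by
    intro i hi
    refine Finset.prod_pos fun t ht => hppos t ?_
    rw [Finset.mem_range] at ht; omega
  have hDshift : ∀ i, ∏ t ∈ Finset.range i, p (t + 1) = ∏ t ∈ Finset.range (i + 1), p t := by
    intro i; rw [Finset.prod_range_succ', hp0, mul_one]
  have hwt : ∀ m : Fin k →₀ ℕ,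
      wt p k m = ∑ i ∈ Finset.range k, (∏ t ∈ Finset.range (i + 1), p t) * dig k m i := by
    intro m
    rw [← Fin.sum_univ_eq_sum_range (fun i => (∏ t ∈ Finset.range (i + 1), p t) * dig k m i) k]
    exact Finset.sum_congr rfl fun i _ => by rw [dig_val]
  have hsplit : ∀ m : Fin k →₀ ℕ,
      wt p k m = (∑ i ∈ Finset.range (k - 1), (∏ t ∈ Finset.range (i + 1), p t) * dig k m i)
        + (∏ t ∈ Finset.range k, p t) * m l := by
    intro m
    have hk1 : Finset.range k = Finset.range ((k - 1) + 1) := by congr 1; omega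
    rw [hwt m, hk1, Finset.sum_range_succ, ← hk1]
    congr 1
    rw [show dig k m (k - 1) = m l from dif_pos hkk]
  have hdig : ∀ m ∈ F.support, ∀ i, i + 1 < k → dig k m i < p (i + 1) := by
    intro m hm i hik
    have hik' : i < k := by omega
    have h1 : m ⟨i, hik'⟩ ≤ MvPolynomial.degreeOf ⟨i, hik'⟩ F :=
      MvPolynomial.monomial_le_degreeOf _ hm
    have h2 := hFdeg ⟨i, hik'⟩ hik
    rw [show dig k m i = m ⟨i, hik'⟩ from dif_pos hik']
    exact lt_of_le_of_lt h1 h2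
  have hradix : ∀ (n : ℕ) (b : ℕ → ℕ), (∀ i, i < n → b i < p (i + 1)) →
      ∑ i ∈ Finset.range n, (∏ t ∈ Finset.range (i + 1), p t) * b i
        < ∏ t ∈ Finset.range (n + 1), p t := by
    intro n b hb
    have h := radix_lt (fun t => p (t + 1)) n b hb
    rw [hDshift] at h
    calc ∑ i ∈ Finset.range n, (∏ t ∈ Finset.range (i + 1), p t) * b i
        = ∑ i ∈ Finset.range n, (∏ t ∈ Finset.range i, p (t + 1)) * b i :=
          Finset.sum_congr rfl fun i _ => by rw [hDshift]
      _ < _ := h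
  have hinj : ∀ m ∈ F.support, ∀ m' ∈ F.support, wt p k m = wt p k m' → m = m' := by
    intro m hm m' hm' h
    rw [hsplit m, hsplit m'] at h
    have hLm := hradix (k - 1) (dig k m) (fun i hi => hdig m hm i (by omega))
    have hLm' := hradix (k - 1) (dig k m') (fun i hi => hdig m' hm' i (by omega))
    rw [show (k - 1) + 1 = k by omega] at hLm hLm'
    obtain ⟨hx, hL⟩ := nat_digit_unique hLm hLm' h
    have hL' : ∑ i ∈ Finset.range (k - 1), (∏ t ∈ Finset.range i, p (t + 1)) * dig k m i
        = ∑ i ∈ Finset.range (k - 1), (∏ t ∈ Finset.range i, p (t + 1)) * dig k m' i := by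
      calc ∑ i ∈ Finset.range (k - 1), (∏ t ∈ Finset.range i, p (t + 1)) * dig k m i
          = ∑ i ∈ Finset.range (k - 1), (∏ t ∈ Finset.range (i + 1), p t) * dig k m i :=
            Finset.sum_congr rfl fun i _ => by rw [hDshift]
        _ = ∑ i ∈ Finset.range (k - 1), (∏ t ∈ Finset.range (i + 1), p t) * dig k m' i := hL
        _ = _ := Finset.sum_congr rfl fun i _ => by rw [hDshift]
    have hdigeq := radix_inj (fun t => p (t + 1)) (k - 1) (dig k m) (dig k m')
      (fun i hi => hdig m hm i (by omega)) (fun i hi => hdig m' hm' i (by omega)) hL'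
    ext i
    rcases Nat.lt_or_ge (i : ℕ) (k - 1) with hi | hi
    · have h2 := hdigeq (i : ℕ) hi
      rwa [dig_val, dig_val] at h2
    · have hi' : i = l := Fin.ext (by have := i.isLt; simp only [hl]; omega)
      rw [hi']; exact hx
  have hPmonic : ∀ m : Fin k →₀ ℕ, (∏ i : Fin k, f i ^ m i).Monic :=
    fun m => Polynomial.monic_prod_of_monic _ _ fun i _ => (hf i).1.pow _
  have hPdeg : ∀ m : Fin k →₀ ℕ, (∏ i : Fin k, f i ^ m i).natDegree = wt p k m := by
    intro m
    rw [Polynomial.natDegree_prod_of_monic _ _ fun i _ => (hf i).1.pow _]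
    exact Finset.sum_congr rfl fun i _ => by
      rw [Polynomial.natDegree_pow, (hf i).2, mul_comm]
  have hexp : (MvPolynomial.aeval f) F
      = ∑ m ∈ F.support, Polynomial.C (MvPolynomial.coeff m F) * ∏ i : Fin k, f i ^ m i := by
    conv_lhs => rw [F.as_sum]
    rw [map_sum]
    refine Finset.sum_congr rfl fun m _ => ?_
    rw [MvPolynomial.aeval_monomial]
    congr 1
    exact Finsupp.prod_fintype _ _ fun i => pow_zero _
  have hcoeff : ∀ N, g.coeff N
      = ∑ m ∈ F.support, MvPolynomial.coeff m F * (∏ i : Fin k, f i ^ m i).coeff N := by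
    intro N
    rw [← hFeval, hexp, Polynomial.finset_sum_coeff]
    exact Finset.sum_congr rfl fun m _ => by rw [Polynomial.coeff_C_mul]
  have hF0 : F ≠ 0 := by
    intro h0
    exact hg.ne_zero (by rw [← hFeval, h0, map_zero])
  obtain ⟨m0, hm0s, hm0max⟩ := F.support.exists_max_image (wt p k)
    (MvPolynomial.support_nonempty.mpr hF0)
  have htopcoeff : g.coeff (wt p k m0) = MvPolynomial.coeff m0 F := by
    rw [hcoeff, Finset.sum_eq_single m0]
    · rw [← hPdeg, (hPmonic m0).coeff_natDegree, mul_one]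
    · intro m hm hne
      have hlt : wt p k m < wt p k m0 :=
        lt_of_le_of_ne (hm0max m hm) fun h => hne (hinj m hm m0 hm0s h)
      rw [Polynomial.coeff_eq_zero_of_natDegree_lt (by rw [hPdeg]; exact hlt), mul_zero]
    · intro h; exact absurd hm0s h
  have hne0 : MvPolynomial.coeff m0 F ≠ 0 := MvPolynomial.mem_support_iff.mp hm0s
  have hwt0 : wt p k m0 = g.natDegree := by
    refine le_antisymm (Polynomial.le_natDegree_of_ne_zero (by rw [htopcoeff]; exact hne0)) ?_
    rw [← hFeval, hexp]
    refine Polynomial.natDegree_sum_le_of_forall_le _ _ fun m hm => ?_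
    exact le_trans (Polynomial.natDegree_C_mul_le _ _) (by rw [hPdeg]; exact hm0max m hm)
  have hN : wt p k m0 = (∏ t ∈ Finset.range k, p t) * p k := by rw [hwt0, hgdeg]
  have hDk : 0 < ∏ t ∈ Finset.range k, p t := by
    have := hDpos (k - 1) hkk
    rwa [show (k - 1) + 1 = k by omega] at this
  have hm0l : m0 l = p k ∧
      (∑ i ∈ Finset.range (k - 1), (∏ t ∈ Finset.range (i + 1), p t) * dig k m0 i) = 0 := by
    have hs := hsplit m0
    rw [hN] at hs
    have hL := hradix (k - 1) (dig k m0) (fun i hi => hdig m0 hm0s i (by omega))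
    rw [show (k - 1) + 1 = k by omega] at hL
    have hdu := nat_digit_unique (D := ∏ t ∈ Finset.range k, p t) (a := 0) (x := p k)
      (b := ∑ i ∈ Finset.range (k - 1), (∏ t ∈ Finset.range (i + 1), p t) * dig k m0 i)
      (y := m0 l) hDk hL (by omega)
    exact ⟨hdu.1.symm, hdu.2.symm⟩
  have hm0eq : m0 = Finsupp.single l (p k) := by
    ext i
    rcases Nat.lt_or_ge (i : ℕ) (k - 1) with hi | hi
    · have hterm : (∏ t ∈ Finset.range ((i : ℕ) + 1), p t) * dig k m0 (i : ℕ) = 0 :=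
        (Finset.sum_eq_zero_iff.mp hm0l.2) _ (Finset.mem_range.mpr hi)
      have hd : dig k m0 (i : ℕ) = 0 := by
        have hpos := hDpos (i : ℕ) i.isLt
        rcases Nat.mul_eq_zero.mp hterm with h | h
        · omega
        · exact h
      rw [dig_val] at hd
      rw [hd, Finsupp.single_apply, if_neg]
      intro h
      have : (l : ℕ) = (i : ℕ) := by rw [h]
      simp only [hl] at this; omega
    · have hi' : i = l := Fin.ext (by have := i.isLt; simp only [hl]; omega)
      rw [hi', hm0l.1, Finsupp.single_apply, if_pos rfl]
  have hc1 : MvPolynomial.coeff m0 F = 1 := by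
    rw [← htopcoeff, hwt0, hg.coeff_natDegree]
  have hXpow : (MvPolynomial.X l ^ p k : MvPolynomial (Fin k) K)
      = MvPolynomial.monomial (Finsupp.single l (p k)) 1 := MvPolynomial.X_pow_eq_monomial
  have hGsupp : ∀ m ∈ (F - MvPolynomial.X l ^ p k).support, m ∈ F.support ∧ m ≠ m0 := by
    intro m hm
    have hcm : MvPolynomial.coeff m (F - MvPolynomial.X l ^ p k) ≠ 0 :=
      MvPolynomial.mem_support_iff.mp hm
    rw [MvPolynomial.coeff_sub, hXpow, MvPolynomial.coeff_monomial] at hcm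
    by_cases he : m = m0
    · exfalso
      apply hcm
      rw [he, hc1, if_pos hm0eq.symm, sub_self]
    · refine ⟨MvPolynomial.mem_support_iff.mpr fun h0 => hcm ?_, he⟩
      rw [h0, if_neg, sub_zero]
      intro hs
      exact he (by rw [← hs, hm0eq])
  have hWlt : ∀ m ∈ (F - MvPolynomial.X l ^ p k).support,
      wt p k m < (∏ t ∈ Finset.range k, p t) * p k := by
    intro m hm
    obtain ⟨hms, hne⟩ := hGsupp m hm
    have h := lt_of_le_of_ne (hm0max m hms) fun h => hne (hinj m hms m0 hm0s h)
    rwa [hN] at h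
  constructor
  · show MvPolynomial.degreeOf l (F - MvPolynomial.X l ^ p k) < p k
    rw [MvPolynomial.degreeOf_lt_iff hpk]
    intro m hm
    have h1 : (∏ t ∈ Finset.range k, p t) * m l ≤ wt p k m := by
      have hle := Finset.single_le_sum
        (f := fun i : Fin k => (∏ t ∈ Finset.range ((i : ℕ) + 1), p t) * m i)
        (fun i _ => Nat.zero_le _) (Finset.mem_univ l)
      calc (∏ t ∈ Finset.range k, p t) * m l
          = (∏ t ∈ Finset.range ((l : ℕ) + 1), p t) * m l := by
            have hlval : (l : ℕ) = k - 1 := by rw [hl]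
            rw [hlval, Nat.sub_add_cancel hk]
        _ ≤ wt p k m := hle
    have h2 := hWlt m hm
    exact Nat.lt_of_mul_lt_mul_left (lt_of_le_of_lt h1 h2)
  · intro m hm j hj1 hjk
    have hm' : m ∈ (F - MvPolynomial.X l ^ p k).support := hm
    obtain ⟨hms, hne⟩ := hGsupp m hm'
    have e1 : (Finset.range k).filter (fun i => i < j) = Finset.range j := by
      ext x
      simp only [Finset.mem_filter, Finset.mem_range]
      omega
    have hfil : ∑ i ∈ Finset.univ.filter (fun i : Fin k => (i : ℕ) < j),
        (∏ t ∈ Finset.range ((i : ℕ) + 1), p t) * m i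
        = ∑ i ∈ Finset.range j, (∏ t ∈ Finset.range (i + 1), p t) * dig k m i := by
      calc ∑ i ∈ Finset.univ.filter (fun i : Fin k => (i : ℕ) < j),
          (∏ t ∈ Finset.range ((i : ℕ) + 1), p t) * m i
          = ∑ i : Fin k, (if (i : ℕ) < j then
              (∏ t ∈ Finset.range ((i : ℕ) + 1), p t) * dig k m (i : ℕ) else 0) := by
            rw [Finset.sum_filter]
            exact Finset.sum_congr rfl fun i _ => by rw [dig_val]
        _ = ∑ i ∈ Finset.range k, (if i < j then
              (∏ t ∈ Finset.range (i + 1), p t) * dig k m i else 0) :=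
            Fin.sum_univ_eq_sum_range
              (fun n => if n < j then (∏ t ∈ Finset.range (n + 1), p t) * dig k m n else 0) k
        _ = ∑ i ∈ (Finset.range k).filter (fun i => i < j),
              (∏ t ∈ Finset.range (i + 1), p t) * dig k m i := (Finset.sum_filter _ _).symm
        _ = _ := by rw [e1]
    rw [hfil]
    rcases Nat.lt_or_ge j k with hjlt | hge
    · exact hradix j (dig k m) fun i hi => hdig m hms i (by omega)
    · have hjk' : j = k := by omega
      subst hjk'
      rw [← hwt m, Finset.prod_range_succ]
      exact hWlt m hm'
end

section
/- There exist nonzero complex numbers b_1,…,b_m such that the ℂ-algebra homomorphism χ : ℂ[x,y_1,…,y_m] → ℂ[t] determined by χ(x) = t^{ω_0} and χ(y_i) = b_i·t^{ω_i} for 1 ≤ i ≤ m has kernel exactly the ideal generated by H_2,…,H_{m+1}; consequently the quotient ring ℂ[x,y_1,…,y_m]/(H_2,…,H_{m+1}) is isomorphic as a ℂ-algebra to the subalgebra ℂ[t^{ω_0}, t^{ω_1}, …, t^{ω_m}] of ℂ[t] generated by the monomials t^{ω_0},…,t^{ω_m}. -/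
open Fin.NatCast

namespace Stmt8Aux
open MvPolynomial Finsupp

variable {m : ℕ} (ω : ℕ → ℕ)

/-- weight of an exponent vector -/
def ea (a : Fin (m + 1) →₀ ℕ) : ℕ := ∑ i : Fin (m + 1), a i * ω (i : ℕ)

lemma ea_eq_range (a : Fin (m + 1) →₀ ℕ) :
    ea ω a = ∑ i ∈ Finset.range (m + 1), a (i : Fin (m + 1)) * ω i := by
  rw [ea, ← Fin.sum_univ_eq_sum_range (fun i => a (i : Fin (m + 1)) * ω i) (m + 1)]
  simp [Fin.cast_val_eq_self]

lemma ea_add (a b : Fin (m + 1) →₀ ℕ) : ea ω (a + b) = ea ω a + ea ω b := by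
  simp [ea, add_mul, Finset.sum_add_distrib]

lemma ea_zero : ea ω (0 : Fin (m + 1) →₀ ℕ) = 0 := by simp [ea]

lemma ea_single (j : Fin (m + 1)) (k : ℕ) : ea ω (Finsupp.single j k) = k * ω (j : ℕ) := by
  rw [ea, Finset.sum_eq_single j]
  · simp
  · intro i _ hij
    simp [Finsupp.single_apply, (Ne.symm hij)]
  · simp

lemma ea_sum {α : Type*} (s : Finset α) (f : α → (Fin (m + 1) →₀ ℕ)) :
    ea ω (∑ i ∈ s, f i) = ∑ i ∈ s, ea ω (f i) := by
  classical
  induction s using Finset.induction with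
  | empty => simp [ea_zero]
  | insert _ _ h ih => simp [Finset.sum_insert h, ea_add, ih]

end Stmt8Aux

namespace Stmt8Aux
open MvPolynomial Finsupp

/-- auxiliary measure at weight `W` -/
def nuW (W : ℕ) (a : Fin (m + 1) →₀ ℕ) : ℕ :=
  ∑ i ∈ Finset.Ico 1 (m + 1), a (i : Fin (m + 1)) * (W + 1) ^ i

lemma nuW_add (W : ℕ) (a b : Fin (m + 1) →₀ ℕ) :
    nuW W (a + b) = nuW W a + nuW W b := by
  simp [nuW, add_mul, Finset.sum_add_distrib]

lemma nuW_sum {α : Type*} (W : ℕ) (s : Finset α) (f : α → (Fin (m + 1) →₀ ℕ)) :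
    nuW W (∑ i ∈ s, f i) = ∑ i ∈ s, nuW W (f i) := by
  classical
  induction s using Finset.induction with
  | empty => simp [nuW]
  | insert _ _ h ih => simp [Finset.sum_insert h, nuW_add, ih]

lemma nuW_single (W : ℕ) (j : Fin (m + 1)) (hj : 1 ≤ (j : ℕ)) (k : ℕ) :
    nuW W (Finsupp.single j k) = k * (W + 1) ^ (j : ℕ) := by
  rw [nuW, Finset.sum_eq_single (j : ℕ)]
  · simp [Fin.cast_val_eq_self]
  · intro i hi hij
    have hilt : i < m + 1 := (Finset.mem_Ico.mp hi).2
    have : (i : Fin (m + 1)) ≠ j := by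
      intro h
      apply hij
      rw [← h, Fin.val_cast_of_lt hilt]
    simp [Finsupp.single_apply, Ne.symm this]
  · intro h
    exact absurd (Finset.mem_Ico.mpr ⟨hj, j.isLt⟩) h

lemma nuW_single_zero (W : ℕ) (j : Fin (m + 1)) (hj : (j : ℕ) = 0) (k : ℕ) :
    nuW W (Finsupp.single j k) = 0 := by
  rw [nuW, Finset.sum_eq_zero]
  intro i hi
  have hi1 : 1 ≤ i := (Finset.mem_Ico.mp hi).1
  have hilt : i < m + 1 := (Finset.mem_Ico.mp hi).2
  have : (i : Fin (m + 1)) ≠ j := by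
    intro h
    have := congrArg Fin.val h
    rw [Fin.val_cast_of_lt hilt, hj] at this
    omega
  simp [Finsupp.single_apply, Ne.symm this]

lemma geom_bound (W : ℕ) : ∀ n, (∑ i ∈ Finset.range n, W * (W + 1) ^ i) < (W + 1) ^ n := by
  intro n
  induction n with
  | zero => simp
  | succ n ih =>
    rw [Finset.sum_range_succ, pow_succ]
    nlinarith [pow_pos (Nat.succ_pos W) n]

end Stmt8Aux

namespace Stmt8Aux
open MvPolynomial Finsupp

variable {p : ℕ → ℕ}

/-- reduced exponent vector -/
def red (m : ℕ) (p : ℕ → ℕ) (a : Fin (m + 1) →₀ ℕ) : Prop :=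
  ∀ i : Fin (m + 1), 1 ≤ (i : ℕ) → a i < p (i : ℕ)

lemma e_key {ω : ℕ → ℕ}
    (hp : ∀ j, 1 ≤ j → j ≤ m →
      IsLeast {α : ℕ | 0 < α ∧ ∃ cf : ℕ → ℤ,
        (α : ℤ) * (ω j : ℤ) = ∑ i ∈ Finset.range j, cf i * (ω i : ℤ)} (p j))
    (a a' : Fin (m + 1) →₀ ℕ) (j : ℕ) (hj1 : 1 ≤ j) (hjm : j ≤ m)
    (hred : a (j : Fin (m + 1)) < p j)
    (hgt : ∀ i : ℕ, j < i → i ≤ m → a (i : Fin (m + 1)) = a' (i : Fin (m + 1)))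
    (hee : ea ω a = ea ω a') : a (j : Fin (m + 1)) ≤ a' (j : Fin (m + 1)) := by
  by_contra hlt
  push_neg at hlt
  set α : ℕ := a (j : Fin (m + 1)) - a' (j : Fin (m + 1)) with hα
  have hαpos : 0 < α := Nat.sub_pos_of_lt hlt
  have hαlt : α < p j := lt_of_le_of_lt (Nat.sub_le _ _) hred
  -- integer sums
  set F : ℕ → ℤ := fun i => ((a (i : Fin (m + 1)) : ℤ) - (a' (i : Fin (m + 1)) : ℤ)) * ω i
    with hF
  have htot : ∑ i ∈ Finset.range (m + 1), F i = 0 := by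
    have h1 := ea_eq_range ω a
    have h2 := ea_eq_range ω a'
    have : (ea ω a : ℤ) = (ea ω a' : ℤ) := by exact_mod_cast hee
    rw [h1, h2] at this
    push_cast at this
    simp only [hF, sub_mul, Finset.sum_sub_distrib]
    omega
  have hsplit : ∑ i ∈ Finset.range (j + 1), F i + ∑ i ∈ Finset.Ico (j + 1) (m + 1), F i
      = ∑ i ∈ Finset.range (m + 1), F i := by
    simp only [Finset.range_eq_Ico]
    exact Finset.sum_Ico_consecutive _ (by omega) (by omega)
  have htail : ∑ i ∈ Finset.Ico (j + 1) (m + 1), F i = 0 := by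
    apply Finset.sum_eq_zero
    intro i hi
    have hi' := Finset.mem_Ico.mp hi
    have := hgt i (by omega) (by omega)
    simp [hF, this]
  have hhead : ∑ i ∈ Finset.range j, F i + F j = 0 := by
    rw [← Finset.sum_range_succ]
    omega
  have hFj : F j = (α : ℤ) * ω j := by
    simp only [hF, hα]
    push_cast [Nat.cast_sub hlt.le]
    ring
  have hmem : (α : ℤ) * (ω j : ℤ) =
      ∑ i ∈ Finset.range j, ((a' (i : Fin (m + 1)) : ℤ) - (a (i : Fin (m + 1)) : ℤ)) * ω i := by
    have : ∑ i ∈ Finset.range j,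
        ((a' (i : Fin (m + 1)) : ℤ) - (a (i : Fin (m + 1)) : ℤ)) * ω i
        = - ∑ i ∈ Finset.range j, F i := by
      rw [← Finset.sum_neg_distrib]
      apply Finset.sum_congr rfl
      intro i _
      simp [hF]; ring
    omega
  have := (hp j hj1 hjm).2 ⟨hαpos, _, hmem⟩
  omega

end Stmt8Aux

namespace Stmt8Aux
open MvPolynomial Finsupp

lemma e_inj {ω p : ℕ → ℕ} (hω : ∀ i, i ≤ m → 0 < ω i)
    (hp : ∀ j, 1 ≤ j → j ≤ m →
      IsLeast {α : ℕ | 0 < α ∧ ∃ cf : ℕ → ℤ,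
        (α : ℤ) * (ω j : ℤ) = ∑ i ∈ Finset.range j, cf i * (ω i : ℤ)} (p j))
    (a a' : Fin (m + 1) →₀ ℕ) (ha : red m p a) (ha' : red m p a')
    (hee : ea ω a = ea ω a') : a = a' := by
  have key : ∀ k : ℕ, ∀ i : Fin (m + 1), m + 1 - k ≤ (i : ℕ) → a i = a' i := by
    intro k
    induction k with
    | zero =>
      intro i hi
      exfalso
      have := i.isLt
      omega
    | succ k ih =>
      intro i hi
      rcases Nat.lt_or_ge (i : ℕ) (m + 1 - k) with h | h
      · have hik : (i : ℕ) = m - k := by omega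
        rcases Nat.eq_zero_or_pos (i : ℕ) with h0 | h1
        · -- index 0 case
          have hall : ∀ l : ℕ, 1 ≤ l → l ≤ m →
              a (l : Fin (m + 1)) = a' (l : Fin (m + 1)) := by
            intro l hl1 hlm
            apply ih
            rw [Fin.val_cast_of_lt (by omega)]
            omega
          have h1 := ea_eq_range ω a
          have h2 := ea_eq_range ω a'
          rw [hee] at h1
          rw [Finset.sum_range_succ'] at h1 h2
          have htails : ∑ i ∈ Finset.range m, a ((i + 1 : ℕ) : Fin (m + 1)) * ω (i + 1)
              = ∑ i ∈ Finset.range m, a' ((i + 1 : ℕ) : Fin (m + 1)) * ω (i + 1) := by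
            apply Finset.sum_congr rfl
            intro l hl
            have hl' := Finset.mem_range.mp hl
            rw [hall (l + 1) (by omega) (by omega)]
          have hsum := h1.symm.trans h2
          rw [htails] at hsum
          have hc : a ((0 : ℕ) : Fin (m + 1)) * ω 0 = a' ((0 : ℕ) : Fin (m + 1)) * ω 0 :=
            Nat.add_left_cancel hsum
          have h0i : i = ((0 : ℕ) : Fin (m + 1)) := by
            apply Fin.ext
            rw [Fin.val_cast_of_lt (by omega)]
            exact h0
          rw [h0i]
          exact Nat.eq_of_mul_eq_mul_right (hω 0 (by omega)) hc
        · -- index ≥ 1 : use e_key both ways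
          have him : (i : ℕ) ≤ m := by omega
          have hicast : ((↑(i : ℕ) : Fin (m + 1))) = i := Fin.cast_val_eq_self i
          have hgt : ∀ l : ℕ, (i : ℕ) < l → l ≤ m →
              a (l : Fin (m + 1)) = a' (l : Fin (m + 1)) := by
            intro l hl1 hlm
            apply ih
            rw [Fin.val_cast_of_lt (by omega)]
            omega
          have k1 := e_key hp a a' (i : ℕ) h1 him (by rw [hicast]; exact ha i h1) hgt hee
          have k2 := e_key hp a' a (i : ℕ) h1 him (by rw [hicast]; exact ha' i h1)
            (fun l h1 h2 => (hgt l h1 h2).symm) hee.symm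
          rw [hicast] at k1 k2
          omega
      · exact ih i h
  ext i
  exact key (m + 1) i (by omega)

end Stmt8Aux

namespace Stmt8Aux
open MvPolynomial Finsupp

open Polynomial in
lemma aeval_mono {m : ℕ} (ω : ℕ → ℕ) (u : Fin (m + 1) → ℂ) (a : Fin (m + 1) →₀ ℕ) (r : ℂ) :
    MvPolynomial.aeval
        (fun i : Fin (m + 1) => Polynomial.C (u i) * Polynomial.X ^ ω (i : ℕ))
        (MvPolynomial.monomial a r)
      = Polynomial.C (r * ∏ i : Fin (m + 1), u i ^ a i) * Polynomial.X ^ ea ω a := by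
  rw [MvPolynomial.aeval_monomial]
  rw [Finsupp.prod_fintype _ _ (fun i => pow_zero _)]
  have : ∏ i : Fin (m + 1), (Polynomial.C (u i) * Polynomial.X ^ ω (i : ℕ)) ^ a i
      = Polynomial.C (∏ i : Fin (m + 1), u i ^ a i) * Polynomial.X ^ ea ω a := by
    rw [ea]
    simp only [mul_pow, ← Polynomial.C_pow, ← pow_mul]
    rw [Finset.prod_mul_distrib, map_prod]
    congr 1
    rw [Finset.prod_pow_eq_pow_sum]
    congr 1
    exact Finset.sum_congr rfl fun i _ => mul_comm _ _
  rw [this]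
  rw [← mul_assoc]
  congr 1
  rw [Polynomial.C_mul]
  rfl

end Stmt8Aux

namespace Stmt8Aux
open MvPolynomial Finsupp

lemma monomial_mem {m : ℕ} {ω p : ℕ → ℕ} {c : ℕ → ℂˣ} {β : ℕ → ℕ → ℕ}
    {H : ℕ → MvPolynomial (Fin (m + 1)) ℂ}
    (hω : ∀ i, i ≤ m → 0 < ω i)
    (hppos : ∀ j, 1 ≤ j → j ≤ m → 0 < p j)
    (hrel : ∀ j, 1 ≤ j → j ≤ m → p j * ω j = ∑ i ∈ Finset.range j, β j i * ω i)
    (hH : ∀ j, 1 ≤ j → j ≤ m →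
      H (j + 1) = MvPolynomial.X (j : Fin (m + 1)) ^ p j
        - MvPolynomial.C ((c j : ℂ)) *
            ∏ i ∈ Finset.range j, MvPolynomial.X (i : Fin (m + 1)) ^ β j i)
    (a : Fin (m + 1) →₀ ℕ) :
    MvPolynomial.monomial a (1 : ℂ) ∈
      Submodule.span ℂ {q : MvPolynomial (Fin (m + 1)) ℂ |
          ∃ a, red m p a ∧ q = MvPolynomial.monomial a 1} ⊔
        (Ideal.span {h : MvPolynomial (Fin (m + 1)) ℂ |
          ∃ j, 1 ≤ j ∧ j ≤ m ∧ h = H (j + 1)}).restrictScalars ℂ := by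
  set I := Ideal.span {h : MvPolynomial (Fin (m + 1)) ℂ | ∃ j, 1 ≤ j ∧ j ≤ m ∧ h = H (j + 1)}
    with hI
  set T := Submodule.span ℂ {q : MvPolynomial (Fin (m + 1)) ℂ |
      ∃ a, red m p a ∧ q = MvPolynomial.monomial a 1} ⊔ I.restrictScalars ℂ with hT
  -- strong induction on the measure ν
  suffices h : ∀ N : ℕ, ∀ a : Fin (m + 1) →₀ ℕ, nuW (ea ω a) a ≤ N →
      MvPolynomial.monomial a (1 : ℂ) ∈ T by
    exact h _ a le_rfl
  intro N
  induction N with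
  | zero =>
    intro a hN
    -- every exponent with index ≥ 1 is zero, hence reduced
    have hred : red m p a := by
      intro i hi1
      have hmem : (i : ℕ) ∈ Finset.Ico 1 (m + 1) := Finset.mem_Ico.mpr ⟨hi1, i.isLt⟩
      have hzero : a ((↑(i : ℕ) : Fin (m + 1))) * (ea ω a + 1) ^ (i : ℕ) = 0 := by
        have := Finset.sum_eq_zero_iff.mp (Nat.le_zero.mp hN) _ hmem
        exact this
      rw [Fin.cast_val_eq_self] at hzero
      have : a i = 0 := by
        rcases Nat.mul_eq_zero.mp hzero with h | h
        · exact h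
        · exact absurd h (pow_pos (Nat.succ_pos _) _).ne'
      rw [this]
      exact hppos _ hi1 (by omega)
    exact Submodule.mem_sup_left (Submodule.subset_span ⟨a, hred, rfl⟩)
  | succ N ih =>
    intro a hN
    by_cases hred : red m p a
    · exact Submodule.mem_sup_left (Submodule.subset_span ⟨a, hred, rfl⟩)
    -- pick an index to reduce
    rw [red] at hred
    push_neg at hred
    obtain ⟨j, hj1, hja⟩ := hred
    have hjm : (j : ℕ) ≤ m := by have := j.isLt; omega
    set jn := (j : ℕ) with hjn
    set a' := a - Finsupp.single j (p jn) with ha'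
    set B : Fin (m + 1) →₀ ℕ :=
      ∑ i ∈ Finset.range jn, Finsupp.single ((i : Fin (m + 1))) (β jn i) with hB
    have hle : Finsupp.single j (p jn) ≤ a := Finsupp.single_le_iff.mpr hja
    have haa : a' + Finsupp.single j (p jn) = a := tsub_add_cancel_of_le hle
    -- the product of X's is a monomial
    have hprod : (∏ i ∈ Finset.range jn, MvPolynomial.X (i : Fin (m + 1)) ^ β jn i :
        MvPolynomial (Fin (m + 1)) ℂ) = MvPolynomial.monomial B 1 := by
      rw [hB, MvPolynomial.monomial_sum_one]
      exact Finset.prod_congr rfl fun i _ => MvPolynomial.X_pow_eq_monomial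
    -- key algebraic identity
    have hkey : MvPolynomial.monomial a (1 : ℂ)
        = MvPolynomial.monomial a' 1 * H (jn + 1)
          + (c jn : ℂ) • MvPolynomial.monomial (a' + B) 1 := by
      have hcast : ((jn : Fin (m + 1))) = j := Fin.cast_val_eq_self j
      rw [hH jn hj1 hjm, hprod, hcast]
      rw [mul_sub, MvPolynomial.X_pow_eq_monomial, MvPolynomial.monomial_mul, mul_one, haa,
        mul_left_comm, MvPolynomial.monomial_mul, mul_one, MvPolynomial.C_mul_monomial, mul_one,
        MvPolynomial.smul_monomial, smul_eq_mul, mul_one]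
      abel
    -- weights
    have hWa' : ea ω a' + p jn * ω jn = ea ω a := by
      rw [← haa, ea_add, ea_single]
    have hWB : ea ω B = p jn * ω jn := by
      rw [hB, ea_sum, hrel jn hj1 hjm]
      apply Finset.sum_congr rfl
      intro i hi
      have hilt : i < m + 1 := by have := Finset.mem_range.mp hi; omega
      rw [ea_single, Fin.val_cast_of_lt hilt]
    have hW : ea ω (a' + B) = ea ω a := by
      rw [ea_add, hWB]; omega
    set W := ea ω a with hWdef
    -- measure decrease
    have hnua : nuW W a' + p jn * (W + 1) ^ jn = nuW W a := by
      conv_rhs => rw [← haa]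
      rw [nuW_add, nuW_single W j hj1]
    have hjW : p jn * ω jn ≤ W := by omega
    have hnuB : nuW W B ≤ ∑ i ∈ Finset.range jn, W * (W + 1) ^ i := by
      rw [hB, nuW_sum]
      apply Finset.sum_le_sum
      intro i hi
      have hilt : i < m + 1 := by have := Finset.mem_range.mp hi; omega
      have hival : (((i : ℕ) : Fin (m + 1)) : ℕ) = i := Fin.val_cast_of_lt hilt
      rcases Nat.eq_zero_or_pos i with h0 | h1
      · rw [nuW_single_zero W _ (by rw [hival, h0])]
        exact Nat.zero_le _
      · rw [nuW_single W _ (by rw [hival]; exact h1), hival]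
        apply Nat.mul_le_mul_right
        -- β jn i ≤ W
        have hterm : β jn i * ω i ≤ p jn * ω jn := by
          rw [hrel jn hj1 hjm]
          exact Finset.single_le_sum (f := fun k => β jn k * ω k) (fun k _ => Nat.zero_le _) hi
        have hω1 : 1 ≤ ω i := hω i (by have := Finset.mem_range.mp hi; omega)
        calc β jn i = β jn i * 1 := (mul_one _).symm
          _ ≤ β jn i * ω i := Nat.mul_le_mul_left _ hω1
          _ ≤ p jn * ω jn := hterm
          _ ≤ W := hjW
    have hnuBlt : nuW W B < p jn * (W + 1) ^ jn := by
      calc nuW W B ≤ ∑ i ∈ Finset.range jn, W * (W + 1) ^ i := hnuB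
        _ < (W + 1) ^ jn := geom_bound W jn
        _ ≤ p jn * (W + 1) ^ jn := Nat.le_mul_of_pos_left _ (hppos jn hj1 hjm)
    have hdec : nuW (ea ω (a' + B)) (a' + B) ≤ N := by
      rw [hW, nuW_add]
      omega
    -- conclude membership
    rw [hkey]
    apply Submodule.add_mem
    · apply Submodule.mem_sup_right
      show MvPolynomial.monomial a' 1 * H (jn + 1) ∈ I
      exact Ideal.mul_mem_left _ _ (Ideal.subset_span ⟨jn, hj1, hjm, rfl⟩)
    · exact Submodule.smul_mem _ _ (ih _ hdec)

end Stmt8Aux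

namespace Stmt8Aux
open MvPolynomial Finsupp

lemma support_red {m : ℕ} {p : ℕ → ℕ} (g : MvPolynomial (Fin (m + 1)) ℂ)
    (hg : g ∈ Submodule.span ℂ {q : MvPolynomial (Fin (m + 1)) ℂ |
        ∃ a, red m p a ∧ q = MvPolynomial.monomial a 1}) :
    ∀ a ∈ g.support, red m p a := by
  induction hg using Submodule.span_induction with
  | mem x hx =>
    obtain ⟨a, ha, rfl⟩ := hx
    intro b hb
    rw [MvPolynomial.support_monomial, if_neg one_ne_zero] at hb
    rwa [Finset.mem_singleton.mp hb]
  | zero => simp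
  | add x y _ _ ihx ihy =>
    intro b hb
    rcases Finset.mem_union.mp (MvPolynomial.support_add hb) with h | h
    · exact ihx b h
    · exact ihy b h
  | smul r x _ ihx =>
    intro b hb
    exact ihx b (MvPolynomial.support_smul hb)

lemma exists_b {m : ℕ} (p : ℕ → ℕ) (c : ℕ → ℂˣ) (β : ℕ → ℕ → ℕ)
    (hppos : ∀ j, 1 ≤ j → j ≤ m → 0 < p j) :
    ∃ b : ℕ → ℂˣ, ∀ j, 1 ≤ j → j ≤ m →
      (b j : ℂ) ^ p j = (c j : ℂ) * ∏ i ∈ Finset.Ico 1 j, (b i : ℂ) ^ β j i := by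
  suffices h : ∀ n, n ≤ m → ∃ b : ℕ → ℂˣ, ∀ j, 1 ≤ j → j ≤ n →
      (b j : ℂ) ^ p j = (c j : ℂ) * ∏ i ∈ Finset.Ico 1 j, (b i : ℂ) ^ β j i from h m le_rfl
  intro n
  induction n with
  | zero => exact fun _ => ⟨fun _ => 1, fun j h1 h0 => by omega⟩
  | succ n ih =>
    intro hn
    obtain ⟨b, hb⟩ := ih (by omega)
    set v : ℂ := (c (n + 1) : ℂ) * ∏ i ∈ Finset.Ico 1 (n + 1), (b i : ℂ) ^ β (n + 1) i with hv
    have hppos' := hppos (n + 1) (by omega) hn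
    have hvne : v ≠ 0 :=
      mul_ne_zero (Units.ne_zero _)
        (Finset.prod_ne_zero_iff.mpr fun i _ => pow_ne_zero _ (Units.ne_zero _))
    obtain ⟨z, hz⟩ := IsAlgClosed.exists_pow_nat_eq v hppos'
    have hz0 : z ≠ 0 := by
      intro h
      apply hvne
      rw [← hz, h, zero_pow hppos'.ne']
    refine ⟨Function.update b (n + 1) (Units.mk0 z hz0), ?_⟩
    intro j hj1 hjn1
    have hupd : ∀ i ∈ Finset.Ico 1 j,
        ((Function.update b (n + 1) (Units.mk0 z hz0) i : ℂ)) ^ β j i = (b i : ℂ) ^ β j i := by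
      intro i hi
      have := Finset.mem_Ico.mp hi
      rw [Function.update_of_ne (by omega)]
    rw [Finset.prod_congr rfl hupd]
    rcases Nat.lt_or_ge j (n + 1) with h | h
    · rw [Function.update_of_ne (by omega)]
      exact hb j hj1 (by omega)
    · have hj : j = n + 1 := by omega
      subst hj
      rw [Function.update_self]
      simp only [Units.val_mk0]
      rw [hz]

end Stmt8Aux

namespace Stmt8Aux
open MvPolynomial Finsupp

open Polynomial in
lemma red_aeval_eq_zero {m : ℕ} {ω p : ℕ → ℕ} (hω : ∀ i, i ≤ m → 0 < ω i)
    (hp : ∀ j, 1 ≤ j → j ≤ m →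
      IsLeast {α : ℕ | 0 < α ∧ ∃ cf : ℕ → ℤ,
        (α : ℤ) * (ω j : ℤ) = ∑ i ∈ Finset.range j, cf i * (ω i : ℤ)} (p j))
    (u : Fin (m + 1) → ℂ) (hu : ∀ i, u i ≠ 0)
    (q : MvPolynomial (Fin (m + 1)) ℂ) (hq : ∀ a ∈ q.support, red m p a)
    (h0 : MvPolynomial.aeval
        (fun i : Fin (m + 1) => Polynomial.C (u i) * Polynomial.X ^ ω (i : ℕ)) q = 0) :
    q = 0 := by
  by_contra hne
  obtain ⟨a₀, ha₀⟩ := (MvPolynomial.support_nonempty.mpr hne)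
  have hexp : MvPolynomial.aeval
      (fun i : Fin (m + 1) => Polynomial.C (u i) * Polynomial.X ^ ω (i : ℕ)) q
      = ∑ a ∈ q.support,
          Polynomial.C (MvPolynomial.coeff a q * ∏ i : Fin (m + 1), u i ^ a i)
            * Polynomial.X ^ ea ω a := by
    conv_lhs => rw [MvPolynomial.as_sum q]
    rw [map_sum]
    exact Finset.sum_congr rfl fun a _ => aeval_mono ω u a _
  have hcoeff := congrArg (fun f => Polynomial.coeff f (ea ω a₀)) (hexp ▸ h0)
  simp only [Polynomial.finset_sum_coeff, Polynomial.coeff_C_mul, Polynomial.coeff_X_pow,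
    Polynomial.coeff_zero] at hcoeff
  rw [Finset.sum_eq_single a₀] at hcoeff
  · rw [if_pos rfl, mul_one] at hcoeff
    have hprodne : (∏ i : Fin (m + 1), u i ^ a₀ i) ≠ 0 :=
      Finset.prod_ne_zero_iff.mpr fun i _ => pow_ne_zero _ (hu i)
    have := (mul_eq_zero.mp hcoeff).resolve_right hprodne
    exact (MvPolynomial.mem_support_iff.mp ha₀) this
  · intro a ha hne'
    rw [if_neg, mul_zero]
    intro heq
    exact hne' (e_inj hω hp a a₀ (hq a ha) (hq a₀ ha₀) heq.symm)
  · intro h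
    exact absurd ha₀ h

end Stmt8Aux


/-- Let `m ≥ 1`, let `ω 0, …, ω m` be positive integers and `p 1, …, p m`
positive integers such that `p j` is the least positive integer `α` with
`α · ω j ∈ ℤ ω 0 + ⋯ + ℤ ω (j-1)`.  For `1 ≤ j ≤ m` let `c j ∈ ℂˣ` and nonnegative integers
`β j 0, …, β j (j-1)` with `β j i < p i` for `1 ≤ i ≤ j - 1` and
`p j · ω j = ∑_{i=0}^{j-1} β j i · ω i`, and set
`H (j+1) = y_j ^ p j − c j · x ^ β j 0 · y₁ ^ β j 1 ⋯ y_{j-1} ^ β j (j-1)` in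
`ℂ[x, y₁, …, y_m]` (modeled as `MvPolynomial (Fin (m+1)) ℂ`, variable `0` being `x` and
variable `i` being `y_i` for `1 ≤ i ≤ m`).  Then there are nonzero `b 1, …, b m ∈ ℂ` such
that the `ℂ`-algebra map `χ : ℂ[x,y₁,…,y_m] → ℂ[t]` with `χ(x) = t ^ ω 0` and
`χ(y_i) = b i · t ^ ω i` has kernel exactly the ideal `(H 2, …, H (m+1))`; consequently
`ℂ[x,y₁,…,y_m]/(H 2, …, H (m+1))` is `ℂ`-algebra isomorphic to the subalgebra
`ℂ[t^{ω 0}, …, t^{ω m}]` of `ℂ[t]`. -/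
theorem stmt8 (m : ℕ) (hm : 1 ≤ m)
    (ω : ℕ → ℕ) (hω : ∀ i, i ≤ m → 0 < ω i)
    (p : ℕ → ℕ)
    (hp : ∀ j, 1 ≤ j → j ≤ m →
      IsLeast {α : ℕ | 0 < α ∧ ∃ cf : ℕ → ℤ,
        (α : ℤ) * (ω j : ℤ) = ∑ i ∈ Finset.range j, cf i * (ω i : ℤ)} (p j))
    (c : ℕ → ℂˣ) (β : ℕ → ℕ → ℕ)
    (hβ : ∀ j, 1 ≤ j → j ≤ m → ∀ i, 1 ≤ i → i ≤ j - 1 → β j i < p i)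
    (hrel : ∀ j, 1 ≤ j → j ≤ m → p j * ω j = ∑ i ∈ Finset.range j, β j i * ω i)
    (H : ℕ → MvPolynomial (Fin (m + 1)) ℂ)
    (hH : ∀ j, 1 ≤ j → j ≤ m →
      H (j + 1) = MvPolynomial.X (Fin.ofNat (m + 1) j) ^ p j
        - MvPolynomial.C ((c j : ℂ)) *
            ∏ i ∈ Finset.range j, MvPolynomial.X (Fin.ofNat (m + 1) i) ^ β j i) :
    ∃ b : ℕ → ℂˣ,
      RingHom.ker (MvPolynomial.aeval
          (fun i : Fin (m + 1) =>
            if (i : ℕ) = 0 then (Polynomial.X : Polynomial ℂ) ^ ω 0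
            else Polynomial.C ((b (i : ℕ) : ℂ)) * Polynomial.X ^ ω (i : ℕ)) :
          MvPolynomial (Fin (m + 1)) ℂ →ₐ[ℂ] Polynomial ℂ)
        = Ideal.span {h : MvPolynomial (Fin (m + 1)) ℂ | ∃ j, 1 ≤ j ∧ j ≤ m ∧ h = H (j + 1)} ∧
      Nonempty ((MvPolynomial (Fin (m + 1)) ℂ ⧸
          Ideal.span {h : MvPolynomial (Fin (m + 1)) ℂ | ∃ j, 1 ≤ j ∧ j ≤ m ∧ h = H (j + 1)})
        ≃ₐ[ℂ] Algebra.adjoin ℂ {f : Polynomial ℂ | ∃ i, i ≤ m ∧ f = Polynomial.X ^ ω i}) := by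
  classical
  have hppos : ∀ j, 1 ≤ j → j ≤ m → 0 < p j := fun j h1 h2 => (hp j h1 h2).1.1
  obtain ⟨b, hb⟩ := Stmt8Aux.exists_b p c β hppos
  refine ⟨b, ?_⟩
  set u : Fin (m + 1) → ℂ := fun i => if (i : ℕ) = 0 then 1 else (b (i : ℕ) : ℂ) with hu
  have hune : ∀ i, u i ≠ 0 := by
    intro i
    rw [hu]
    dsimp only
    split
    · exact one_ne_zero
    · exact Units.ne_zero _
  have hfun : (fun i : Fin (m + 1) =>
        if (i : ℕ) = 0 then (Polynomial.X : Polynomial ℂ) ^ ω 0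
        else Polynomial.C ((b (i : ℕ) : ℂ)) * Polynomial.X ^ ω (i : ℕ))
      = (fun i : Fin (m + 1) => Polynomial.C (u i) * Polynomial.X ^ ω (i : ℕ)) := by
    funext i
    rw [hu]
    dsimp only
    by_cases h : (i : ℕ) = 0
    · rw [if_pos h, if_pos h, Polynomial.C_1, one_mul, h]
    · rw [if_neg h, if_neg h]
  rw [hfun]
  set φ : Fin (m + 1) → Polynomial ℂ :=
    fun i => Polynomial.C (u i) * Polynomial.X ^ ω (i : ℕ) with hφ
  set χ : MvPolynomial (Fin (m + 1)) ℂ →ₐ[ℂ] Polynomial ℂ := MvPolynomial.aeval φ with hχ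
  set gens : Set (MvPolynomial (Fin (m + 1)) ℂ) :=
    {h | ∃ j, 1 ≤ j ∧ j ≤ m ∧ h = H (j + 1)} with hgens
  set I : Ideal (MvPolynomial (Fin (m + 1)) ℂ) := Ideal.span gens with hI
  -- χ kills the generators
  have hχX : ∀ i : Fin (m + 1), χ (MvPolynomial.X i)
      = Polynomial.C (u i) * Polynomial.X ^ ω (i : ℕ) := by
    intro i
    rw [hχ, MvPolynomial.aeval_X]
  have hgenker : ∀ g ∈ gens, χ g = 0 := by
    rintro g ⟨j, hj1, hjm, rfl⟩
    have hjval : (((j : ℕ) : Fin (m + 1)) : ℕ) = j := Fin.val_cast_of_lt (by omega)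
    rw [hH j hj1 hjm, map_sub, map_mul, map_pow, hχX, map_prod]
    have hterm1 : (Polynomial.C (u (j : Fin (m + 1))) * Polynomial.X
          ^ ω (((j : ℕ) : Fin (m + 1)) : ℕ)) ^ p j
        = Polynomial.C ((b j : ℂ) ^ p j) * Polynomial.X ^ (p j * ω j) := by
      rw [mul_pow, ← Polynomial.C_pow, ← pow_mul, hjval]
      have : u ((j : ℕ) : Fin (m + 1)) = (b j : ℂ) := by
        rw [hu]
        dsimp only
        rw [hjval, if_neg (by omega)]
      rw [this, mul_comm (ω j)]
    have hterm2 : ∀ i ∈ Finset.range j, χ (MvPolynomial.X ((i : ℕ) : Fin (m + 1)) ^ β j i)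
        = Polynomial.C ((if i = 0 then 1 else (b i : ℂ)) ^ β j i)
            * Polynomial.X ^ (β j i * ω i) := by
      intro i hi
      have hival : (((i : ℕ) : Fin (m + 1)) : ℕ) = i :=
        Fin.val_cast_of_lt (by have := Finset.mem_range.mp hi; omega)
      rw [map_pow, hχX, mul_pow, ← Polynomial.C_pow, ← pow_mul, hival]
      congr 2
      · rw [hu]
        dsimp only
        rw [hival]
      · rw [mul_comm]
    simp only [show ∀ k, Fin.ofNat (m + 1) k = ((k : ℕ) : Fin (m + 1)) from fun _ => rfl]
    rw [hterm1, Finset.prod_congr rfl hterm2]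
    rw [Finset.prod_mul_distrib, ← map_prod, Finset.prod_pow_eq_pow_sum]
    have hC : χ (MvPolynomial.C ((c j : ℂ))) = Polynomial.C ((c j : ℂ)) := by
      rw [hχ]
      simp
    rw [hC, ← mul_assoc, ← Polynomial.C_mul]
    rw [← hrel j hj1 hjm]
    rw [← sub_mul]
    have hcoefs : (b j : ℂ) ^ p j
        = (c j : ℂ) * ∏ i ∈ Finset.range j, (if i = 0 then 1 else (b i : ℂ)) ^ β j i := by
      rw [hb j hj1 hjm]
      congr 1
      rw [Finset.range_eq_Ico, Finset.prod_eq_prod_Ico_succ_bot (by omega : 0 < j)]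
      rw [if_pos rfl, one_pow, one_mul]
      apply Finset.prod_congr rfl
      intro i hi
      have := Finset.mem_Ico.mp hi
      rw [if_neg (by omega)]
    rw [hcoefs, sub_self, zero_mul]
  -- I ≤ ker χ
  have hIker : I ≤ RingHom.ker χ := by
    rw [hI, Ideal.span_le]
    intro g hg
    exact RingHom.mem_ker.mpr (hgenker g hg)
  -- everything decomposes
  have htop : ∀ f : MvPolynomial (Fin (m + 1)) ℂ,
      f ∈ Submodule.span ℂ {q : MvPolynomial (Fin (m + 1)) ℂ |
          ∃ a, Stmt8Aux.red m p a ∧ q = MvPolynomial.monomial a 1} ⊔ I.restrictScalars ℂ := by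
    intro f
    rw [MvPolynomial.as_sum f]
    apply Submodule.sum_mem
    intro a _
    have : MvPolynomial.monomial a (MvPolynomial.coeff a f)
        = MvPolynomial.coeff a f • MvPolynomial.monomial a 1 := by
      rw [MvPolynomial.smul_monomial, smul_eq_mul, mul_one]
    rw [this]
    exact Submodule.smul_mem _ _ (Stmt8Aux.monomial_mem hω hppos hrel hH a)
  -- ker χ ≤ I
  have hkerI : RingHom.ker χ ≤ I := by
    intro f hf
    obtain ⟨g, hg, h, hh, hgh⟩ := Submodule.mem_sup.mp (htop f)
    have hhI : h ∈ I := hh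
    have hχh : χ h = 0 := RingHom.mem_ker.mp (hIker hhI)
    have hχg : χ g = 0 := by
      have hχf : χ f = 0 := RingHom.mem_ker.mp hf
      rw [← hgh, map_add, hχh, add_zero] at hχf
      exact hχf
    have hg0 : g = 0 := by
      apply Stmt8Aux.red_aeval_eq_zero hω hp u hune g (Stmt8Aux.support_red g hg)
      exact hχg
    rw [← hgh, hg0, zero_add]
    exact hhI
  have hker : RingHom.ker χ = I := le_antisymm hkerI hIker
  refine ⟨hker, ?_⟩
  -- range of χ
  have hrange : χ.range
      = Algebra.adjoin ℂ {f : Polynomial ℂ | ∃ i, i ≤ m ∧ f = Polynomial.X ^ ω i} := by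
    apply le_antisymm
    · rw [hχ, ← Algebra.adjoin_range_eq_range_aeval]
      apply Algebra.adjoin_le
      rintro f ⟨i, rfl⟩
      rw [hφ]
      dsimp only
      by_cases h : (i : ℕ) = 0
      · have : u i = 1 := by rw [hu]; dsimp only; rw [if_pos h]
        rw [this, Polynomial.C_1, one_mul]
        apply Algebra.subset_adjoin
        exact ⟨(i : ℕ), by have := i.isLt; omega, rfl⟩
      · have : u i = (b (i : ℕ) : ℂ) := by rw [hu]; dsimp only; rw [if_neg h]
        rw [this, ← Polynomial.smul_eq_C_mul]
        apply Subalgebra.smul_mem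
        apply Algebra.subset_adjoin
        exact ⟨(i : ℕ), by have := i.isLt; omega, rfl⟩
    · apply Algebra.adjoin_le
      rintro f ⟨i, him, rfl⟩
      have hival : (((i : ℕ) : Fin (m + 1)) : ℕ) = i := Fin.val_cast_of_lt (by omega)
      by_cases h : i = 0
      · refine ⟨MvPolynomial.X ((i : ℕ) : Fin (m + 1)), ?_⟩
        show χ (MvPolynomial.X ((i : ℕ) : Fin (m + 1))) = _
        rw [hχX, hival]
        have : u ((i : ℕ) : Fin (m + 1)) = 1 := by
          rw [hu]; dsimp only; rw [hival, if_pos h]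
        rw [this, Polynomial.C_1, one_mul]
      · refine ⟨MvPolynomial.C (((b i : ℂ))⁻¹) * MvPolynomial.X ((i : ℕ) : Fin (m + 1)), ?_⟩
        show χ (MvPolynomial.C (((b i : ℂ))⁻¹) * MvPolynomial.X ((i : ℕ) : Fin (m + 1))) = _
        rw [map_mul, hχX, hival]
        have hCc : χ (MvPolynomial.C (((b i : ℂ))⁻¹)) = Polynomial.C (((b i : ℂ))⁻¹) := by
          rw [hχ]; simp
        have : u ((i : ℕ) : Fin (m + 1)) = (b i : ℂ) := by
          rw [hu]; dsimp only; rw [hival, if_neg h]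
        rw [hCc, this, ← mul_assoc, ← Polynomial.C_mul,
          inv_mul_cancel₀ (Units.ne_zero _), Polynomial.C_1, one_mul]
  exact ⟨(Ideal.quotientEquivAlgOfEq ℂ hker.symm).trans
    ((Ideal.quotientKerEquivRange χ).trans (Subalgebra.equivOfEq _ _ hrange))⟩
end

section
/- The relation ≺ is a monomial well-order on the monomials of ℂ[x,y_1,…,y_m] compatible with multiplication, and the set {H_2,…,H_m} is a Gröbner basis with respect to ≺ of the ideal it generates: for every nonzero F in the ideal of ℂ[x,y_1,…,y_m] generated by H_2,…,H_m, the ≺-greatest monomial occurring in F is divisible by y_j^{p_j} for some j with 1 ≤ j ≤ m−1. -/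
/-- The monomial order `≺` on exponent vectors `γ : Fin (m+1) →₀ ℕ` of monomials
`x^{γ 0} y₁^{γ 1} ⋯ y_m^{γ m}` of `ℂ[x,y₁,…,y_m]`: `γ ≺ γ'` iff the `ω`-weight of `γ` is
smaller than that of `γ'`, or the weights are equal and the rightmost nonzero entry of
`γ − γ'` is negative. -/
def prec9 (m : ℕ) (ω : ℕ → ℕ) (γ γ' : Fin (m + 1) →₀ ℕ) : Prop :=
  (∑ i : Fin (m + 1), γ i * ω (i : ℕ)) < (∑ i : Fin (m + 1), γ' i * ω (i : ℕ)) ∨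
  ((∑ i : Fin (m + 1), γ i * ω (i : ℕ)) = (∑ i : Fin (m + 1), γ' i * ω (i : ℕ)) ∧
    ∃ i : Fin (m + 1), γ i < γ' i ∧ ∀ i' : Fin (m + 1), i < i' → γ i' = γ' i')

open Fin.NatCast

namespace S9

variable {m : ℕ} {ω p : ℕ → ℕ} {β : ℕ → ℕ → ℕ} {j : ℕ}

/-- weight -/
def wt (m : ℕ) (ω : ℕ → ℕ) (γ : Fin (m + 1) →₀ ℕ) : ℕ :=
  ∑ i : Fin (m + 1), γ i * ω (i : ℕ)

lemma prec9_def (γ γ' : Fin (m+1) →₀ ℕ) :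
    prec9 m ω γ γ' ↔ (wt m ω γ < wt m ω γ' ∨ (wt m ω γ = wt m ω γ' ∧
      ∃ i : Fin (m + 1), γ i < γ' i ∧ ∀ i' : Fin (m + 1), i < i' → γ i' = γ' i')) := Iff.rfl

lemma wt_add (γ τ : Fin (m+1) →₀ ℕ) : wt m ω (γ + τ) = wt m ω γ + wt m ω τ := by
  simp [wt, Finsupp.add_apply, add_mul, Finset.sum_add_distrib]

lemma prec9_irrefl (γ : Fin (m+1) →₀ ℕ) : ¬ prec9 m ω γ γ := by
  rintro (h | ⟨-, i, h, -⟩) <;> exact lt_irrefl _ h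

lemma prec9_trans {γ₁ γ₂ γ₃ : Fin (m+1) →₀ ℕ} (h12 : prec9 m ω γ₁ γ₂)
    (h23 : prec9 m ω γ₂ γ₃) : prec9 m ω γ₁ γ₃ := by
  rcases h12 with h12 | ⟨e12, i, hi, hi'⟩
  · rcases h23 with h23 | ⟨e23, _⟩
    · exact Or.inl (h12.trans h23)
    · exact Or.inl (e23 ▸ h12)
  · rcases h23 with h23 | ⟨e23, k, hk, hk'⟩
    · exact Or.inl (e12 ▸ h23)
    · refine Or.inr ⟨e12.trans e23, ?_⟩
      rcases lt_trichotomy i k with h | rfl | h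
      · exact ⟨k, (hi' k h) ▸ hk, fun i' h' => (hi' i' (h.trans h')).trans (hk' i' h')⟩
      · exact ⟨i, hi.trans hk, fun i' h' => (hi' i' h').trans (hk' i' h')⟩
      · exact ⟨i, (hk' i h) ▸ hi, fun i' h' => (hi' i' h').trans (hk' i' (h.trans h'))⟩

lemma prec9_trichot (γ γ' : Fin (m+1) →₀ ℕ) :
    prec9 m ω γ γ' ∨ γ = γ' ∨ prec9 m ω γ' γ := by
  classical
  rcases lt_trichotomy (wt m ω γ) (wt m ω γ') with h | h | h
  · exact Or.inl (Or.inl h)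
  · by_cases hEq : γ = γ'
    · exact Or.inr (Or.inl hEq)
    · have hs : (Finset.univ.filter (fun i : Fin (m+1) => γ i ≠ γ' i)).Nonempty := by
        by_contra hc
        rw [Finset.not_nonempty_iff_eq_empty] at hc
        refine hEq (Finsupp.ext fun i => ?_)
        by_contra hne
        have : i ∈ Finset.univ.filter (fun i : Fin (m+1) => γ i ≠ γ' i) := by
          simp [hne]
        simp [hc] at this
      set i := (Finset.univ.filter (fun i : Fin (m+1) => γ i ≠ γ' i)).max' hs with hidef
      have hmem := (Finset.univ.filter (fun i : Fin (m+1) => γ i ≠ γ' i)).max'_mem hs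
      rw [Finset.mem_filter] at hmem
      have habove : ∀ i' : Fin (m+1), i < i' → γ i' = γ' i' := by
        intro i' hlt
        by_contra hne
        have : i' ∈ Finset.univ.filter (fun i : Fin (m+1) => γ i ≠ γ' i) := by simp [hne]
        exact absurd (Finset.le_max' _ _ this) (not_le.mpr hlt)
      rcases lt_or_gt_of_ne hmem.2 with hlt | hgt
      · exact Or.inl (Or.inr ⟨h, i, hlt, habove⟩)
      · exact Or.inr (Or.inr (Or.inr ⟨h.symm, i, hgt, fun i' h' => (habove i' h').symm⟩))
  · exact Or.inr (Or.inr (Or.inl h))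

lemma prec9_asymm {γ γ' : Fin (m+1) →₀ ℕ} (h : prec9 m ω γ γ') : ¬ prec9 m ω γ' γ :=
  fun h' => prec9_irrefl γ (prec9_trans h h')

lemma prec9_add (γ γ' τ : Fin (m+1) →₀ ℕ) (h : prec9 m ω γ γ') :
    prec9 m ω (γ + τ) (γ' + τ) := by
  rcases h with h | ⟨he, i, hi, hi'⟩
  · exact Or.inl (by simp only [Finsupp.add_apply, add_mul, Finset.sum_add_distrib]; omega)
  · refine Or.inr ⟨by simp only [Finsupp.add_apply, add_mul, Finset.sum_add_distrib]; omega,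
      i, ?_, ?_⟩
    · simpa [Finsupp.add_apply] using hi
    · intro i' h'
      simp only [Finsupp.add_apply]
      rw [hi' i' h']

lemma prec9_wf : WellFounded (prec9 m ω) := by
  have hsub : @Subrelation (Fin (m+1) →₀ ℕ) (prec9 m ω)
      (InvImage (Prod.Lex (· < ·) (Pi.Lex (· < ·) (fun {_} => (· < ·))))
        (fun γ => (wt m ω γ, fun i : Fin (m+1) => γ i.rev))) := by
    intro γ γ' h
    rcases h with h | ⟨he, i, hi, hi'⟩
    · exact Prod.Lex.left _ _ h
    · have he' : wt m ω γ = wt m ω γ' := he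
      unfold InvImage
      dsimp only
      rw [he']
      refine Prod.Lex.right _ ⟨i.rev, fun j hj => ?_, by simpa [Fin.rev_rev] using hi⟩
      exact hi' j.rev (Fin.lt_rev_iff.mp hj)
  exact Subrelation.wf hsub (InvImage.wf _
    (WellFounded.prod_lex (Nat.lt_wfRel.wf) (Pi.Lex.wellFounded _ (fun _ => Nat.lt_wfRel.wf))))

lemma exists_max (s : Finset (Fin (m+1) →₀ ℕ)) (hs : s.Nonempty) :
    ∃ μ ∈ s, ∀ γ ∈ s, γ ≠ μ → prec9 m ω γ μ := by
  classical
  induction s using Finset.induction_on with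
  | empty => exact absurd hs (by simp)
  | @insert a s ha ih =>
    by_cases hse : s.Nonempty
    · obtain ⟨μ, hμs, hmax⟩ := ih hse
      rcases prec9_trichot (m := m) (ω := ω) a μ with h | heq | h
      · refine ⟨μ, Finset.mem_insert_of_mem hμs, ?_⟩
        intro γ hγ hne
        rcases Finset.mem_insert.mp hγ with rfl | hγ
        · exact h
        · exact hmax γ hγ hne
      · subst heq
        refine ⟨a, Finset.mem_insert_self _ _, ?_⟩
        intro γ hγ hne
        rcases Finset.mem_insert.mp hγ with rfl | hγ
        · exact absurd rfl hne
        · exact hmax γ hγ hne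
      · refine ⟨a, Finset.mem_insert_self _ _, ?_⟩
        intro γ hγ hne
        rcases Finset.mem_insert.mp hγ with rfl | hγ
        · exact absurd rfl hne
        · by_cases hγμ : γ = μ
          · exact hγμ ▸ h
          · exact prec9_trans (hmax γ hγ hγμ) h
    · rw [Finset.not_nonempty_iff_eq_empty] at hse; subst hse
      exact ⟨a, by simp, fun γ hγ hne => absurd (by simpa using hγ) hne⟩

noncomputable def bv (m : ℕ) (β : ℕ → ℕ → ℕ) (j : ℕ) : Fin (m+1) →₀ ℕ :=
  ∑ i ∈ Finset.range j, Finsupp.single (i : Fin (m+1)) (β j i)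

lemma bv_apply (hj : j ≤ m) (i' : Fin (m+1)) :
    bv m β j i' = if (i' : ℕ) < j then β j (i' : ℕ) else 0 := by
  classical
  unfold bv
  rw [Finsupp.finset_sum_apply]
  have hterm : ∀ i ∈ Finset.range j,
      (Finsupp.single (i : Fin (m+1)) (β j i)) i' = if i = (i' : ℕ) then β j i else 0 := by
    intro i hi
    rw [Finset.mem_range] at hi
    have hv : ((i : Fin (m+1)) : ℕ) = i := Fin.val_cast_of_lt (by omega)
    rw [Finsupp.single_apply]
    by_cases h : i = (i' : ℕ)
    · rw [if_pos (by rw [Fin.ext_iff, hv, h]), if_pos h]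
    · rw [if_neg (by rw [Fin.ext_iff, hv]; exact h), if_neg h]
  rw [Finset.sum_congr rfl hterm, Finset.sum_ite_eq' (Finset.range j) ((i' : ℕ))
    (fun i => β j i)]
  simp only [Finset.mem_range]

lemma wt_single (i : Fin (m+1)) (n : ℕ) : wt m ω (Finsupp.single i n) = n * ω (i : ℕ) := by
  unfold wt
  rw [Finset.sum_eq_single i (fun i' _ hne => by
    rw [Finsupp.single_apply, if_neg (fun h => hne h.symm), zero_mul])
    (fun h => absurd (Finset.mem_univ i) h)]
  rw [Finsupp.single_eq_same]

lemma wt_bv (hj : j ≤ m) (hrel : p j * ω j = ∑ i ∈ Finset.range j, β j i * ω i) :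
    wt m ω (bv m β j) = p j * ω j := by
  unfold wt
  have h1 : ∀ i' : Fin (m+1), bv m β j i' * ω (i' : ℕ)
      = (fun n => (if n < j then β j n else 0) * ω n) (i' : ℕ) := by
    intro i'
    rw [bv_apply hj]
  rw [Finset.sum_congr rfl (fun i' _ => h1 i'),
    Fin.sum_univ_eq_sum_range (fun n => (if n < j then β j n else 0) * ω n) (m+1)]
  rw [← Finset.sum_subset (Finset.range_subset_range.mpr (by omega : j ≤ m + 1))
    (fun x _ hx => by rw [Finset.mem_range, not_lt] at hx; rw [if_neg (by omega), zero_mul])]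
  rw [hrel]
  exact Finset.sum_congr rfl fun i hi => by
    rw [Finset.mem_range] at hi; rw [if_pos hi]

lemma prodX (g : ℕ → Fin (m+1)) (f : ℕ → ℕ) (s : Finset ℕ) :
    (∏ i ∈ s, (MvPolynomial.X (g i) : MvPolynomial (Fin (m+1)) ℂ) ^ f i)
      = MvPolynomial.monomial (∑ i ∈ s, Finsupp.single (g i) (f i)) 1 := by
  classical
  induction s using Finset.induction_on with
  | empty => simp
  | @insert a s ha ih =>
    rw [Finset.prod_insert ha, Finset.sum_insert ha, ih, MvPolynomial.X_pow_eq_monomial,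
      MvPolynomial.monomial_mul, one_mul]


open MvPolynomial in
lemma H_eq {c : ℕ → ℂˣ} {H : ℕ → MvPolynomial (Fin (m + 1)) ℂ}
    (hH : H (j + 1) = MvPolynomial.X (j : Fin (m + 1)) ^ p j
        - MvPolynomial.C ((c j : ℂ)) *
            ∏ i ∈ Finset.range j, MvPolynomial.X (i : Fin (m + 1)) ^ β j i) :
    H (j+1) = monomial (Finsupp.single (j : Fin (m+1)) (p j)) 1
      - monomial (bv m β j) ((c j : ℂ)) := by
  rw [hH, prodX, MvPolynomial.C_mul_monomial, mul_one, MvPolynomial.X_pow_eq_monomial]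
  rfl

open MvPolynomial in
lemma step (hp : ∀ j, 1 ≤ j → j ≤ m - 1 → 2 ≤ p j)
    (hrel : ∀ j, 1 ≤ j → j ≤ m - 1 → p j * ω j = ∑ i ∈ Finset.range j, β j i * ω i)
    {c : ℕ → ℂˣ} {H : ℕ → MvPolynomial (Fin (m + 1)) ℂ}
    (hH : ∀ j, 1 ≤ j → j ≤ m - 1 →
      H (j + 1) = MvPolynomial.X (j : Fin (m + 1)) ^ p j
        - MvPolynomial.C ((c j : ℂ)) *
            ∏ i ∈ Finset.range j, MvPolynomial.X (i : Fin (m + 1)) ^ β j i)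
    (F : MvPolynomial (Fin (m+1)) ℂ) (γ₀ : Fin (m+1) →₀ ℕ)
    (hγ₀ : γ₀ ∈ F.support)
    (hdiv : ∃ j, 1 ≤ j ∧ j ≤ m - 1 ∧ p j ≤ γ₀ ((j : Fin (m+1))))
    (hmax : ∀ δ ∈ F.support, (∃ j, 1 ≤ j ∧ j ≤ m - 1 ∧ p j ≤ δ ((j : Fin (m+1)))) →
      δ ≠ γ₀ → prec9 m ω δ γ₀) :
    ∃ F', (F - F' ∈ Ideal.span {h | ∃ j, 1 ≤ j ∧ j ≤ m - 1 ∧ h = H (j+1)}) ∧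
      (∀ δ ∈ F'.support, (∃ j, 1 ≤ j ∧ j ≤ m - 1 ∧ p j ≤ δ ((j : Fin (m+1)))) →
        prec9 m ω δ γ₀) ∧
      (∀ γ, prec9 m ω γ₀ γ → F'.coeff γ = F.coeff γ) := by
  classical
  obtain ⟨j, hj1, hj2, hpj⟩ := hdiv
  have hjm : j ≤ m := by omega
  have hval : ((j : Fin (m+1)) : ℕ) = j := Fin.val_cast_of_lt (by omega)
  set jF : Fin (m+1) := (j : Fin (m+1)) with hjF
  set e : Fin (m+1) →₀ ℕ := Finsupp.single jF (p j) with he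
  have hle : e ≤ γ₀ := Finsupp.single_le_iff.mpr hpj
  set α : Fin (m+1) →₀ ℕ := γ₀ - e with hα
  have hαe : α + e = γ₀ := tsub_add_cancel_of_le hle
  set b := bv m β j with hb
  set γ₁ := α + b with hγ₁
  set z := F.coeff γ₀ with hz
  have hb_at : ∀ i' : Fin (m+1), j ≤ (i' : ℕ) → b i' = 0 := by
    intro i' h
    rw [hb, bv_apply hjm, if_neg (by omega)]
  have hγ₁j : γ₁ jF = γ₀ jF - p j := by
    rw [hγ₁, Finsupp.add_apply, hα, Finsupp.tsub_apply, he, Finsupp.single_eq_same,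
      hb_at jF (le_of_eq hval.symm), add_zero]
  have hγ₁above : ∀ i', jF < i' → γ₁ i' = γ₀ i' := by
    intro i' h
    have hvlt : j < (i' : ℕ) := by
      have := h
      rw [Fin.lt_def, hval] at this
      exact this
    rw [hγ₁, Finsupp.add_apply, hα, Finsupp.tsub_apply, he, Finsupp.single_apply,
      if_neg (ne_of_lt h), hb_at i' (le_of_lt hvlt), tsub_zero, add_zero]
  have hwt : wt m ω γ₁ = wt m ω γ₀ := by
    rw [← hαe, hγ₁, wt_add, wt_add, he, wt_single, hb, wt_bv hjm (hrel j hj1 hj2), hval]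
  have hprec : prec9 m ω γ₁ γ₀ := by
    refine Or.inr ⟨hwt, jF, ?_, hγ₁above⟩
    have h2 := hp j hj1 hj2
    have hγ0j : p j ≤ γ₀ jF := hpj
    rw [hγ₁j]
    omega
  have hne : γ₁ ≠ γ₀ := fun h => prec9_irrefl γ₀ (h ▸ hprec)
  set G := monomial α z * H (j+1) with hG
  have hGeq : G = monomial γ₀ z - monomial γ₁ (z * (c j : ℂ)) := by
    rw [hG, H_eq (hH j hj1 hj2), mul_sub, MvPolynomial.monomial_mul,
      MvPolynomial.monomial_mul, mul_one, hαe, hγ₁]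
  have hcoeff : ∀ δ, (F - G).coeff δ
      = F.coeff δ - (if γ₀ = δ then z else 0) + (if γ₁ = δ then z * (c j : ℂ) else 0) := by
    intro δ
    rw [MvPolynomial.coeff_sub, hGeq, MvPolynomial.coeff_sub, MvPolynomial.coeff_monomial,
      MvPolynomial.coeff_monomial]
    ring
  have hc0 : (F - G).coeff γ₀ = 0 := by
    rw [hcoeff, if_pos rfl, if_neg hne]
    ring
  refine ⟨F - G, ?_, ?_, ?_⟩
  · rw [sub_sub_cancel]
    exact Ideal.mul_mem_left _ _ (Ideal.subset_span ⟨j, hj1, hj2, rfl⟩)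
  · intro δ hδ hdivδ
    have hδne : δ ≠ γ₀ := by
      rintro rfl
      rw [MvPolynomial.mem_support_iff] at hδ
      exact hδ hc0
    by_cases hδ1 : δ = γ₁
    · exact hδ1 ▸ hprec
    · have hFδ : (F - G).coeff δ = F.coeff δ := by
        rw [hcoeff, if_neg (fun h => hδne h.symm), if_neg (fun h => hδ1 h.symm)]
        ring
      refine hmax δ ?_ hdivδ hδne
      rw [MvPolynomial.mem_support_iff] at hδ ⊢
      rwa [hFδ] at hδ
  · intro γ hγ
    have h0 : γ₀ ≠ γ := fun h => prec9_irrefl γ (by rw [h] at hγ; exact hγ)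
    have h1 : γ₁ ≠ γ := fun h => by
      rw [← h] at hγ
      exact prec9_irrefl γ₀ (prec9_trans hγ hprec)
    rw [hcoeff, if_neg h0, if_neg h1]
    ring

def Dv (m : ℕ) (p : ℕ → ℕ) (δ : Fin (m+1) →₀ ℕ) : Prop :=
  ∃ j, 1 ≤ j ∧ j ≤ m - 1 ∧ p j ≤ δ ((j : Fin (m+1)))

open MvPolynomial in
lemma reduce (hp : ∀ j, 1 ≤ j → j ≤ m - 1 → 2 ≤ p j)
    (hrel : ∀ j, 1 ≤ j → j ≤ m - 1 → p j * ω j = ∑ i ∈ Finset.range j, β j i * ω i)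
    {c : ℕ → ℂˣ} {H : ℕ → MvPolynomial (Fin (m + 1)) ℂ}
    (hH : ∀ j, 1 ≤ j → j ≤ m - 1 →
      H (j + 1) = MvPolynomial.X (j : Fin (m + 1)) ^ p j
        - MvPolynomial.C ((c j : ℂ)) *
            ∏ i ∈ Finset.range j, MvPolynomial.X (i : Fin (m + 1)) ^ β j i)
    (g : Fin (m+1) →₀ ℕ) :
    ∀ F : MvPolynomial (Fin (m+1)) ℂ,
      (∀ δ ∈ F.support, Dv m p δ → prec9 m ω δ g) →
      ∃ r, F - r ∈ Ideal.span {h | ∃ j, 1 ≤ j ∧ j ≤ m - 1 ∧ h = H (j+1)} ∧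
        (∀ γ ∈ r.support, ¬ Dv m p γ) ∧
        (∀ γ, (∀ δ ∈ F.support, Dv m p δ → prec9 m ω δ γ) → r.coeff γ = F.coeff γ) := by
  refine WellFounded.induction (prec9_wf (m := m) (ω := ω))
    (C := fun g => ∀ F : MvPolynomial (Fin (m+1)) ℂ,
      (∀ δ ∈ F.support, Dv m p δ → prec9 m ω δ g) →
      ∃ r, F - r ∈ Ideal.span {h | ∃ j, 1 ≤ j ∧ j ≤ m - 1 ∧ h = H (j+1)} ∧
        (∀ γ ∈ r.support, ¬ Dv m p γ) ∧
        (∀ γ, (∀ δ ∈ F.support, Dv m p δ → prec9 m ω δ γ) → r.coeff γ = F.coeff γ)) g ?_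
  clear g
  intro g ih F hF
  classical
  by_cases hD : ∃ γ₀ ∈ F.support, Dv m p γ₀
  · obtain ⟨γD, hγD1, hγD2⟩ := hD
    have hDne : (F.support.filter (fun δ => Dv m p δ)).Nonempty :=
      ⟨γD, Finset.mem_filter.mpr ⟨hγD1, hγD2⟩⟩
    obtain ⟨γ₀, hγ₀D, hγ₀max⟩ := exists_max (ω := ω) _ hDne
    rw [Finset.mem_filter] at hγ₀D
    obtain ⟨F', hF'I, hF'div, hF'coeff⟩ := step hp hrel hH F γ₀ hγ₀D.1 hγ₀D.2
      (fun δ hδ hdvδ hne => hγ₀max δ (Finset.mem_filter.mpr ⟨hδ, hdvδ⟩) hne)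
    have hγ₀g : prec9 m ω γ₀ g := hF γ₀ hγ₀D.1 hγ₀D.2
    obtain ⟨r, hr1, hr2, hr3⟩ := ih γ₀ hγ₀g F' hF'div
    refine ⟨r, ?_, hr2, ?_⟩
    · have := Ideal.add_mem _ hF'I hr1
      rwa [sub_add_sub_cancel] at this
    · intro γ hγ
      have hpγ : prec9 m ω γ₀ γ := hγ γ₀ hγ₀D.1 hγ₀D.2
      rw [hr3 γ (fun δ hδ hdv => prec9_trans (hF'div δ hδ hdv) hpγ), hF'coeff γ hpγ]
  · exact ⟨F, by rw [sub_self]; exact Ideal.zero_mem _,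
      fun γ hγ hdv => hD ⟨γ, hγ, hdv⟩, fun γ _ => rfl⟩

lemma exists_a (m : ℕ) (p : ℕ → ℕ) (hp : ∀ j, 1 ≤ j → j ≤ m - 1 → 2 ≤ p j)
    (c : ℕ → ℂˣ) (β : ℕ → ℕ → ℕ) :
    ∃ a : ℕ → ℂ, (∀ i, a i ≠ 0) ∧ ∀ j, 1 ≤ j → j ≤ m - 1 →
      a j ^ p j = (c j : ℂ) * ∏ i ∈ Finset.range j, a i ^ β j i := by
  suffices h : ∀ n, ∃ a : ℕ → ℂ, (∀ i, a i ≠ 0) ∧ ∀ j, 1 ≤ j → j ≤ m - 1 → j < n →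
      a j ^ p j = (c j : ℂ) * ∏ i ∈ Finset.range j, a i ^ β j i by
    obtain ⟨a, h1, h2⟩ := h m
    exact ⟨a, h1, fun j hj1 hj2 => h2 j hj1 hj2 (by omega)⟩
  intro n
  induction n with
  | zero => exact ⟨fun _ => 1, fun _ => one_ne_zero, fun j _ _ h => absurd h (by omega)⟩
  | succ n ih =>
    obtain ⟨a, h1, h2⟩ := ih
    by_cases hn : 1 ≤ n ∧ n ≤ m - 1
    · have hppos : 0 < p n := by have := hp n hn.1 hn.2; omega
      have hw : (c n : ℂ) * ∏ i ∈ Finset.range n, a i ^ β n i ≠ 0 :=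
        mul_ne_zero (c n).ne_zero
          (Finset.prod_ne_zero_iff.mpr fun i _ => pow_ne_zero _ (h1 i))
      obtain ⟨z, hz⟩ := IsAlgClosed.exists_pow_nat_eq
        ((c n : ℂ) * ∏ i ∈ Finset.range n, a i ^ β n i) hppos
      have hz0 : z ≠ 0 := by
        intro h0
        rw [h0, zero_pow (by omega)] at hz
        exact hw hz.symm
      refine ⟨Function.update a n z, fun i => ?_, ?_⟩
      · by_cases hi : i = n
        · rw [hi, Function.update_self]; exact hz0
        · rw [Function.update_of_ne hi]; exact h1 i
      · intro j hj1 hj2 hjn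
        by_cases hjn' : j = n
        · subst hjn'
          rw [Function.update_self, hz]
          congr 1
          refine Finset.prod_congr rfl fun i hi => ?_
          rw [Function.update_of_ne (by rw [Finset.mem_range] at hi; omega)]
        · have hjlt : j < n := by omega
          rw [Function.update_of_ne hjn', h2 j hj1 hj2 hjlt]
          congr 1
          refine Finset.prod_congr rfl fun i hi => ?_
          rw [Function.update_of_ne (by rw [Finset.mem_range] at hi; omega)]
    · refine ⟨a, h1, fun j hj1 hj2 hjn => h2 j hj1 hj2 (by omega)⟩

def vK (m : ℕ) (p : ℕ → ℕ) (β : ℕ → ℕ → ℕ) (j : ℕ) : Fin (m+1) → ℤ :=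
  fun i => (if (i : ℕ) = j then (p j : ℤ) else 0) - (if (i : ℕ) < j then (β j (i : ℕ) : ℤ) else 0)

def LK (m : ℕ) (p : ℕ → ℕ) (β : ℕ → ℕ → ℕ) : Submodule ℤ (Fin (m+1) → ℤ) :=
  Submodule.span ℤ (Set.range (fun j : (Finset.Icc 1 (m-1) : Finset ℕ) => vK m p β (j : ℕ)))

lemma LK_bounded (hp : ∀ j, 1 ≤ j → j ≤ m - 1 → 2 ≤ p j) :
    ∀ w ∈ LK m p β, (∀ j, 1 ≤ j → j ≤ m - 1 → |w ((j : Fin (m+1)))| < (p j : ℤ)) → w = 0 := by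
  classical
  intro w hw hbound
  rw [LK, Submodule.mem_span_range_iff_exists_fun] at hw
  obtain ⟨k, hk⟩ := hw
  set K : ℕ → ℤ := fun n => if h : n ∈ Finset.Icc 1 (m-1) then k ⟨n, h⟩ else 0 with hKdef
  have hKval : ∀ (i : (Finset.Icc 1 (m-1) : Finset ℕ)), K (i : ℕ) = k i := by
    intro i
    rw [hKdef]
    simp only
    rw [dif_pos i.2]
  have hsum : ∑ n ∈ Finset.Icc 1 (m-1), K n • vK m p β n = w := by
    rw [← hk, ← Finset.sum_coe_sort (Finset.Icc 1 (m-1)) (fun n => K n • vK m p β n)]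
    exact Finset.sum_congr rfl fun i _ => by rw [hKval i]
  have hKzero : ∀ N n, n ∈ Finset.Icc 1 (m-1) → m - 1 - n < N → K n = 0 := by
    intro N
    induction N with
    | zero => intro n hn hlt; omega
    | succ N ih =>
      intro n hn hlt
      rw [Finset.mem_Icc] at hn
      have hval : ((n : Fin (m+1)) : ℕ) = n := Fin.val_cast_of_lt (by omega)
      have hwn : w ((n : Fin (m+1))) = K n * (p n : ℤ) := by
        rw [← hsum, Finset.sum_apply]
        rw [Finset.sum_eq_single_of_mem n (Finset.mem_Icc.mpr hn) ?side]
        · rw [Pi.smul_apply, smul_eq_mul]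
          have : vK m p β n ((n : Fin (m+1))) = (p n : ℤ) := by
            rw [vK]
            simp [hval]
          rw [this]
        case side =>
          intro q hq hqn
          rw [Pi.smul_apply, smul_eq_mul]
          rw [Finset.mem_Icc] at hq
          by_cases hlt2 : n < q
          · rw [ih q (Finset.mem_Icc.mpr hq) (by omega), zero_mul]
          · have : vK m p β q ((n : Fin (m+1))) = 0 := by
              rw [vK]
              simp only [hval]
              rw [if_neg (fun h : n = q => hqn h.symm), if_neg (by omega : ¬ n < q)]
              ring
            rw [this, mul_zero]
      have hb := hbound n hn.1 hn.2
      rw [hwn] at hb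
      have hp2 : (2 : ℤ) ≤ (p n : ℤ) := by exact_mod_cast hp n hn.1 hn.2
      rcases eq_or_ne (K n) 0 with h | h
      · exact h
      · exfalso
        have h1 : 1 ≤ |K n| := Int.one_le_abs (by simpa using h)
        have h2 : (p n : ℤ) ≤ |K n * (p n : ℤ)| := by
          rw [abs_mul, abs_of_nonneg (by omega : (0:ℤ) ≤ (p n : ℤ))]
          nlinarith [abs_nonneg (K n)]
        omega
  have hz : ∀ n ∈ Finset.Icc 1 (m-1), K n • vK m p β n = 0 := fun n hn => by
    rw [hKzero m n hn (by rw [Finset.mem_Icc] at hn; omega), zero_smul]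
  rw [← hsum, Finset.sum_congr rfl hz, Finset.sum_const_zero]

noncomputable def phi (m : ℕ) (p : ℕ → ℕ) (β : ℕ → ℕ → ℕ) (a : ℕ → ℂ) :
    MvPolynomial (Fin (m+1)) ℂ →+* AddMonoidAlgebra ℂ ((Fin (m+1) → ℤ) ⧸ LK m p β) :=
  MvPolynomial.eval₂Hom (AddMonoidAlgebra.singleZeroRingHom)
    (fun i => AddMonoidAlgebra.single ((LK m p β).mkQ (Pi.single i (1:ℤ))) (a (i : ℕ)))

lemma phi_monomial (a : ℕ → ℂ) (γ : Fin (m+1) →₀ ℕ) (z : ℂ) :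
    phi m p β a (MvPolynomial.monomial γ z)
      = AddMonoidAlgebra.single ((LK m p β).mkQ (fun i => (γ i : ℤ)))
          (z * ∏ i : Fin (m+1), a (i : ℕ) ^ γ i) := by
  rw [phi, MvPolynomial.eval₂Hom_monomial]
  rw [Finsupp.prod_fintype _ _ (fun i => pow_zero _)]
  simp_rw [AddMonoidAlgebra.single_pow]
  rw [AddMonoidAlgebra.prod_single]
  rw [show (AddMonoidAlgebra.singleZeroRingHom z : AddMonoidAlgebra ℂ ((Fin (m+1) → ℤ) ⧸ LK m p β))
    = AddMonoidAlgebra.single 0 z from rfl]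
  rw [AddMonoidAlgebra.single_mul_single, zero_add]
  congr 1
  have h1 : ∀ i : Fin (m+1), γ i • (LK m p β).mkQ (Pi.single i (1:ℤ))
      = (LK m p β).mkQ (Pi.single i ((γ i : ℤ))) := by
    intro i
    rw [← map_nsmul]
    congr 1
    ext i'
    rw [Pi.smul_apply]
    rcases eq_or_ne i' i with rfl | hne
    · rw [Pi.single_eq_same, Pi.single_eq_same, nsmul_eq_mul, mul_one]
    · rw [Pi.single_eq_of_ne hne, Pi.single_eq_of_ne hne, smul_zero]
  rw [Finset.sum_congr rfl (fun i _ => h1 i), ← map_sum]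
  congr 1
  ext i'
  rw [Finset.sum_apply]
  refine (Finset.sum_eq_single_of_mem i' (Finset.mem_univ i') ?_).trans (Pi.single_eq_same i' _)
  intro b _ hne
  exact Pi.single_eq_of_ne (Ne.symm hne) _

lemma prod_pow_bv (a : ℕ → ℂ) (hj : j ≤ m) :
    ∏ i : Fin (m+1), a (i : ℕ) ^ (bv m β j) i = ∏ i ∈ Finset.range j, a i ^ β j i := by
  have h1 : ∀ i' : Fin (m+1), a (i' : ℕ) ^ (bv m β j) i'
      = (fun n => a n ^ (if n < j then β j n else 0)) (i' : ℕ) := by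
    intro i'
    rw [bv_apply hj]
  rw [Finset.prod_congr rfl (fun i' _ => h1 i'),
    Fin.prod_univ_eq_prod_range (fun n => a n ^ (if n < j then β j n else 0)) (m+1),
    ← Finset.prod_subset (Finset.range_subset_range.mpr (by omega : j ≤ m + 1))
      (fun x _ hx => by rw [Finset.mem_range, not_lt] at hx; rw [if_neg (by omega), pow_zero])]
  exact Finset.prod_congr rfl fun i hi => by
    rw [Finset.mem_range] at hi; rw [if_pos hi]

open MvPolynomial in
lemma phi_H (a : ℕ → ℂ)
    (harel : ∀ j, 1 ≤ j → j ≤ m - 1 →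
      a j ^ p j = (c : ℕ → ℂˣ) j * ∏ i ∈ Finset.range j, a i ^ β j i)
    {H : ℕ → MvPolynomial (Fin (m + 1)) ℂ}
    (hH : ∀ j, 1 ≤ j → j ≤ m - 1 →
      H (j + 1) = MvPolynomial.X (j : Fin (m + 1)) ^ p j
        - MvPolynomial.C ((c j : ℂ)) *
            ∏ i ∈ Finset.range j, MvPolynomial.X (i : Fin (m + 1)) ^ β j i)
    (hj1 : 1 ≤ j) (hj2 : j ≤ m - 1) :
    phi m p β a (H (j+1)) = 0 := by
  have hjm : j ≤ m := by omega
  have hval : ((j : Fin (m+1)) : ℕ) = j := Fin.val_cast_of_lt (by omega)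
  rw [H_eq (hH j hj1 hj2), map_sub, phi_monomial, phi_monomial]
  have hq : (LK m p β).mkQ (fun i => ((Finsupp.single (j : Fin (m+1)) (p j)) i : ℤ))
      = (LK m p β).mkQ (fun i => ((bv m β j) i : ℤ)) := by
    rw [Submodule.mkQ_apply, Submodule.mkQ_apply, Submodule.Quotient.eq]
    have heqv : ((fun i => ((Finsupp.single (j : Fin (m+1)) (p j)) i : ℤ))
        - (fun i => ((bv m β j) i : ℤ))) = vK m p β j := by
      ext i
      rw [Pi.sub_apply, vK, Finsupp.single_apply, bv_apply hjm]
      have hiff : ((j : Fin (m+1)) = i) ↔ ((i : ℕ) = j) := by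
        rw [Fin.ext_iff, hval, eq_comm]
      by_cases h1 : (i : ℕ) = j
      · rw [if_pos (hiff.mpr h1), if_pos h1]
        by_cases h2 : (i : ℕ) < j
        · omega
        · rw [if_neg h2, if_neg h2]; simp
      · rw [if_neg (fun h => h1 (hiff.mp h)), if_neg h1]
        by_cases h2 : (i : ℕ) < j
        · rw [if_pos h2, if_pos h2]; simp
        · rw [if_neg h2, if_neg h2]; simp
    rw [heqv]
    exact Submodule.subset_span ⟨⟨j, Finset.mem_Icc.mpr ⟨hj1, hj2⟩⟩, rfl⟩
  have hc1 : ∏ i : Fin (m+1), a (i : ℕ) ^ (Finsupp.single (j : Fin (m+1)) (p j)) i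
      = a j ^ p j := by
    rw [Finset.prod_eq_single ((j : Fin (m+1)))
      (fun i _ hne => by rw [Finsupp.single_apply, if_neg (fun h => hne h.symm), pow_zero])
      (fun h => absurd (Finset.mem_univ _) h)]
    rw [Finsupp.single_eq_same, hval]
  rw [hq, hc1, one_mul, prod_pow_bv a hjm, ← harel j hj1 hj2, sub_self]

open MvPolynomial in
lemma normal_zero (hp : ∀ j, 1 ≤ j → j ≤ m - 1 → 2 ≤ p j)
    {c : ℕ → ℂˣ} {H : ℕ → MvPolynomial (Fin (m + 1)) ℂ}
    (hH : ∀ j, 1 ≤ j → j ≤ m - 1 →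
      H (j + 1) = MvPolynomial.X (j : Fin (m + 1)) ^ p j
        - MvPolynomial.C ((c j : ℂ)) *
            ∏ i ∈ Finset.range j, MvPolynomial.X (i : Fin (m + 1)) ^ β j i)
    (r : MvPolynomial (Fin (m+1)) ℂ)
    (hr : r ∈ Ideal.span {h | ∃ j, 1 ≤ j ∧ j ≤ m - 1 ∧ h = H (j+1)})
    (hnorm : ∀ γ ∈ r.support, ¬ Dv m p γ) : r = 0 := by
  classical
  obtain ⟨a, ha0, harel⟩ := exists_a m p hp c β
  by_contra hr0
  have hker : Ideal.span {h | ∃ j, 1 ≤ j ∧ j ≤ m - 1 ∧ h = H (j+1)}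
      ≤ RingHom.ker (phi m p β a) := by
    rw [Ideal.span_le]
    rintro h ⟨j, hj1, hj2, rfl⟩
    exact phi_H a harel hH hj1 hj2
  have hφr : phi m p β a r = 0 := hker hr
  have hs : r.support.Nonempty := MvPolynomial.support_nonempty.mpr hr0
  obtain ⟨γ₀, hγ₀⟩ := hs
  have hexp : phi m p β a r = ∑ γ ∈ r.support,
      AddMonoidAlgebra.single ((LK m p β).mkQ (fun i => (γ i : ℤ)))
        (r.coeff γ * ∏ i : Fin (m+1), a (i : ℕ) ^ γ i) := by
    conv_lhs => rw [← MvPolynomial.support_sum_monomial_coeff r]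
    rw [map_sum]
    exact Finset.sum_congr rfl fun γ _ => phi_monomial a γ _
  have hinj : ∀ γ ∈ r.support, ∀ γ' ∈ r.support,
      (LK m p β).mkQ (fun i => (γ i : ℤ)) = (LK m p β).mkQ (fun i => (γ' i : ℤ)) → γ = γ' := by
    intro γ hγ γ' hγ' heq
    rw [Submodule.mkQ_apply, Submodule.mkQ_apply, Submodule.Quotient.eq] at heq
    have hb : ∀ j, 1 ≤ j → j ≤ m - 1 →
        |((fun i => (γ i : ℤ)) - fun i => (γ' i : ℤ)) ((j : Fin (m+1)))| < (p j : ℤ) := by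
      intro j hj1 hj2
      have h1 : ¬ (p j ≤ γ ((j : Fin (m+1)))) := fun hle => hnorm γ hγ ⟨j, hj1, hj2, hle⟩
      have h2 : ¬ (p j ≤ γ' ((j : Fin (m+1)))) := fun hle => hnorm γ' hγ' ⟨j, hj1, hj2, hle⟩
      rw [Pi.sub_apply, abs_lt]
      constructor <;> omega
    have hzero := LK_bounded hp _ heq hb
    ext i
    have := congrFun hzero i
    rw [Pi.sub_apply] at this
    simp only [Pi.zero_apply] at this
    omega
  set g₀ := (LK m p β).mkQ (fun i => (γ₀ i : ℤ)) with hg₀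
  have hval : (phi m p β a r).coeff g₀ = r.coeff γ₀ * ∏ i : Fin (m+1), a (i : ℕ) ^ γ₀ i := by
    rw [hexp, AddMonoidAlgebra.coeff_sum, Finsupp.finset_sum_apply]
    rw [Finset.sum_eq_single_of_mem γ₀ hγ₀ ?side]
    · exact Finsupp.single_eq_same
    case side =>
      intro γ hγ hne
      exact Finsupp.single_eq_of_ne' (fun h => hne (hinj γ hγ γ₀ hγ₀ h))
  rw [hφr] at hval
  have hz : (0 : AddMonoidAlgebra ℂ ((Fin (m+1) → ℤ) ⧸ LK m p β)).coeff g₀ = 0 := rfl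
  rw [hz] at hval
  exact (mul_ne_zero (MvPolynomial.mem_support_iff.mp hγ₀)
    (Finset.prod_ne_zero_iff.mpr fun i _ => pow_ne_zero _ (ha0 _))) hval.symm

end S9

/-- Let `m ≥ 2`, `ω 0, …, ω m` positive, and for `1 ≤ j ≤ m - 1` let
`p j ≥ 2`, `c j ∈ ℂˣ`, `β j i < p i` (for `1 ≤ i ≤ j - 1`) with
`p j · ω j = ∑_{i=0}^{j-1} β j i · ω i`, and
`H (j+1) = y_j ^ p j − c j · x ^ β j 0 · y₁ ^ β j 1 ⋯ y_{j-1} ^ β j (j-1)` in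
`ℂ[x,y₁,…,y_m]`.  Then `≺` is a monomial well-order compatible with multiplication, and
`{H 2, …, H m}` is a Gröbner basis of the ideal it generates: the `≺`-greatest monomial of
any nonzero `F` in that ideal is divisible by `y_j ^ p j` for some `1 ≤ j ≤ m - 1`. -/
theorem stmt9 (m : ℕ) (hm : 2 ≤ m)
    (ω : ℕ → ℕ) (hω : ∀ i, i ≤ m → 0 < ω i)
    (p : ℕ → ℕ) (hp : ∀ j, 1 ≤ j → j ≤ m - 1 → 2 ≤ p j)
    (c : ℕ → ℂˣ) (β : ℕ → ℕ → ℕ)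
    (hβ : ∀ j, 1 ≤ j → j ≤ m - 1 → ∀ i, 1 ≤ i → i ≤ j - 1 → β j i < p i)
    (hrel : ∀ j, 1 ≤ j → j ≤ m - 1 → p j * ω j = ∑ i ∈ Finset.range j, β j i * ω i)
    (H : ℕ → MvPolynomial (Fin (m + 1)) ℂ)
    (hH : ∀ j, 1 ≤ j → j ≤ m - 1 →
      H (j + 1) = MvPolynomial.X (j : Fin (m + 1)) ^ p j
        - MvPolynomial.C ((c j : ℂ)) *
            ∏ i ∈ Finset.range j, MvPolynomial.X (i : Fin (m + 1)) ^ β j i) :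
    (IsStrictTotalOrder (Fin (m + 1) →₀ ℕ) (prec9 m ω) ∧
      WellFounded (prec9 m ω) ∧
      ∀ γ γ' τ : Fin (m + 1) →₀ ℕ, prec9 m ω γ γ' → prec9 m ω (γ + τ) (γ' + τ)) ∧
    ∀ F ∈ Ideal.span {h : MvPolynomial (Fin (m + 1)) ℂ | ∃ j, 1 ≤ j ∧ j ≤ m - 1 ∧ h = H (j + 1)},
      F ≠ 0 → ∃ μ ∈ F.support,
        (∀ γ ∈ F.support, γ ≠ μ → prec9 m ω γ μ) ∧
        ∃ j, 1 ≤ j ∧ j ≤ m - 1 ∧ p j ≤ μ (j : Fin (m + 1)) := by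
  classical
  constructor
  · refine ⟨?_, S9.prec9_wf, fun γ γ' τ h => S9.prec9_add γ γ' τ h⟩
    exact { trichotomous := fun a b h1 h2 => ((S9.prec9_trichot a b).resolve_left h1).resolve_right h2,
            irrefl := S9.prec9_irrefl,
            trans := fun a b c hab hbc => S9.prec9_trans hab hbc }
  · intro F hF hF0
    obtain ⟨μ, hμ, hmax⟩ := S9.exists_max (ω := ω) F.support
      (MvPolynomial.support_nonempty.mpr hF0)
    refine ⟨μ, hμ, hmax, ?_⟩
    by_contra hnd
    have hμdiv : ¬ S9.Dv m p μ := hnd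
    have hall : ∀ δ ∈ F.support, S9.Dv m p δ → prec9 m ω δ μ := by
      intro δ hδ hdv
      exact hmax δ hδ (fun h => hμdiv (h ▸ hdv))
    obtain ⟨r, hr1, hr2, hr3⟩ := S9.reduce hp hrel hH μ F hall
    have hrI : r ∈ Ideal.span
        {h : MvPolynomial (Fin (m + 1)) ℂ | ∃ j, 1 ≤ j ∧ j ≤ m - 1 ∧ h = H (j + 1)} := by
      have := Ideal.sub_mem _ hF hr1
      rwa [sub_sub_cancel] at this
    have hr0 : r ≠ 0 := by
      intro h0
      have hco := hr3 μ hall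
      rw [h0] at hco
      exact MvPolynomial.mem_support_iff.mp hμ (by rw [← hco]; simp)
    exact hr0 (S9.normal_zero hp hH r hrI hr2)
end

section
/- Let p_0 := 1 and let p_1,…,p_l be positive integers with p := p_1·p_2⋯p_l. Let φ ∈ K = HahnSeries ℚ ℂ be p-supported and let ζ ∈ ℂ be a primitive p-th root of unity. Then for all integers m, n with 0 ≤ m < n ≤ l, one has f_φ^{[p_0p_1⋯p_n]} = ∏_{i=0}^{p_{m+1}⋯p_n − 1} ζ^{i·p_0p_1⋯p_m} ⋆_p ( f_φ^{[p_0p_1⋯p_m]} ), where ⋆_p is applied coefficientwise to polynomials in y. -/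
noncomputable section

/-- Degree-wise Puiseux series are modeled by Hahn series over `ℚ` with complex
coefficients (substituting `x = t⁻¹`). -/
abbrev K : Type := HahnSeries ℚ ℂ

/-- `φ` is `r`-supported if `r • s` is an integer for every `s` in the support of `φ`. -/
def RSupported (r : ℕ) (φ : K) : Prop :=
  ∀ s ∈ φ.support, ∃ m : ℤ, (r : ℚ) * s = (m : ℚ)

/-- The star operation `c ⋆_r φ`: the coefficient at `s` is `c ^ (r·s)` (an integer power,
here written `c ^ ⌊r·s⌋`, which agrees with `c ^ (r·s)` whenever `r·s ∈ ℤ`, in particular on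
the support of an `r`-supported series) times the coefficient of `φ` at `s`. -/
def hstar (c : ℂˣ) (r : ℕ) (φ : K) : K where
  coeff s := (c : ℂ) ^ ⌊(r : ℚ) * s⌋ * φ.coeff s
  isPWO_support' := by
    apply Set.IsPWO.mono φ.isPWO_support
    intro s hs
    simp only [Function.mem_support, ne_eq] at hs ⊢
    intro h
    apply hs
    show (c : ℂ) ^ ⌊(r : ℚ) * s⌋ * φ.coeff s = 0
    rw [h, mul_zero]

/-- The star operation extended coefficientwise to univariate polynomials over `K`. -/
def polyStar (c : ℂˣ) (r : ℕ) (f : Polynomial K) : Polynomial K :=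
  ∑ n ∈ f.support, Polynomial.monomial n (hstar c r (f.coeff n))

/-- `f_φ^{[N]} := ∏_{j=0}^{N-1} (y − ζ^j ⋆_p φ) ∈ K[y]`. -/
def fPow (p : ℕ) (ζ : ℂˣ) (φ : K) (N : ℕ) : Polynomial K :=
  ∏ j ∈ Finset.range N, (Polynomial.X - Polynomial.C (hstar (ζ ^ j) p φ))

namespace Stmt11Aux

lemma hstar_coeff (c : ℂˣ) (r : ℕ) (φ : K) (s : ℚ) :
    (hstar c r φ).coeff s = (c : ℂ) ^ ⌊(r : ℚ) * s⌋ * φ.coeff s := rfl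

lemma support_hstar (c : ℂˣ) (r : ℕ) (φ : K) : (hstar c r φ).support = φ.support := by
  ext s
  simp [HahnSeries.mem_support, hstar_coeff, zpow_ne_zero _ c.ne_zero]

def RSub (r : ℕ) : Subring K where
  carrier := {φ | RSupported r φ}
  zero_mem' := by intro s hs; simp [HahnSeries.support_zero] at hs
  one_mem' := by
    intro s hs
    rw [HahnSeries.mem_support, HahnSeries.coeff_one] at hs
    have : s = 0 := by by_contra h; simp [h] at hs
    exact ⟨0, by simp [this]⟩
  add_mem' := by
    intro a b ha hb s hs
    rcases HahnSeries.support_add_subset a b hs with h | h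
    · exact ha s h
    · exact hb s h
  neg_mem' := by
    intro a ha s hs
    exact ha s (by simpa using hs)
  mul_mem' := by
    intro a b ha hb s hs
    obtain ⟨u, hu, v, hv, rfl⟩ := HahnSeries.support_mul_subset hs
    obtain ⟨mu, hmu⟩ := ha u hu
    obtain ⟨mv, hmv⟩ := hb v hv
    exact ⟨mu + mv, by push_cast; rw [mul_add, hmu, hmv]⟩

lemma hstar_mem (c : ℂˣ) (r : ℕ) (φ : RSub r) : hstar c r (φ : K) ∈ RSub r := by
  intro s hs
  exact φ.2 s (by rwa [support_hstar] at hs)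

lemma floor_eq {r : ℕ} {a : K} (ha : RSupported r a) {s : ℚ} (hs : s ∈ a.support) :
    ((⌊(r : ℚ) * s⌋ : ℤ) : ℚ) = (r : ℚ) * s := by
  obtain ⟨m, hm⟩ := ha s hs
  rw [hm, Int.floor_intCast]

lemma hstar_mul (c : ℂˣ) (r : ℕ) {a b : K} (ha : RSupported r a) (hb : RSupported r b) :
    hstar c r (a * b) = hstar c r a * hstar c r b := by
  ext s
  rw [hstar_coeff, HahnSeries.coeff_mul, Finset.mul_sum,
    HahnSeries.coeff_mul_left' a.isPWO_support (le_of_eq (support_hstar c r a))]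
  have hset : Finset.antidiagonal a.isPWO_support (hstar c r b).isPWO_support s
      = Finset.antidiagonal a.isPWO_support b.isPWO_support s := by
    ext ij
    simp [Finset.mem_addAntidiagonal, support_hstar]
  rw [hset]
  refine Finset.sum_congr rfl fun ij hij => ?_
  rw [Finset.mem_addAntidiagonal] at hij
  obtain ⟨h1, h2, h3⟩ := hij
  rw [hstar_coeff, hstar_coeff]
  have h4 : (r:ℚ) * s = ((⌊(r:ℚ) * ij.1⌋ + ⌊(r:ℚ) * ij.2⌋ : ℤ) : ℚ) := by
    push_cast
    rw [floor_eq ha h1, floor_eq hb h2, ← mul_add, h3]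
  rw [h4, Int.floor_intCast, zpow_add₀ c.ne_zero]
  ring

lemma hstar_zero (c : ℂˣ) (r : ℕ) : hstar c r 0 = 0 := by
  ext s; simp [hstar_coeff]

lemma hstar_one (c : ℂˣ) (r : ℕ) : hstar c r 1 = 1 := by
  ext s
  rw [hstar_coeff, HahnSeries.coeff_one]
  by_cases h : s = 0
  · simp [h, HahnSeries.coeff_one]
  · simp [h, HahnSeries.coeff_one]

lemma hstar_add (c : ℂˣ) (r : ℕ) (a b : K) :
    hstar c r (a + b) = hstar c r a + hstar c r b := by
  ext s
  simp [hstar_coeff, HahnSeries.coeff_add, mul_add]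

lemma hstar_hstar (c d : ℂˣ) (r : ℕ) (a : K) :
    hstar c r (hstar d r a) = hstar (c * d) r a := by
  ext s
  simp only [hstar_coeff, Units.val_mul, mul_zpow]
  ring

def hstarHom (c : ℂˣ) (r : ℕ) : RSub r →+* RSub r where
  toFun φ := ⟨hstar c r (φ : K), hstar_mem c r φ⟩
  map_one' := by ext1; exact hstar_one c r
  map_mul' a b := by ext1; exact hstar_mul c r a.2 b.2
  map_zero' := by ext1; exact hstar_zero c r
  map_add' a b := by ext1; exact hstar_add c r a b

lemma polyStar_coeff (c : ℂˣ) (r : ℕ) (f : Polynomial K) (k : ℕ) :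
    (polyStar c r f).coeff k = hstar c r (f.coeff k) := by
  rw [polyStar, Polynomial.finset_sum_coeff]
  simp only [Polynomial.coeff_monomial]
  rw [Finset.sum_ite_eq' f.support k fun n => hstar c r (f.coeff n)]
  by_cases h : k ∈ f.support
  · simp [h]
  · simp only [h, if_false]
    rw [Polynomial.notMem_support_iff.mp h, hstar_zero]

lemma polyStar_map (c : ℂˣ) (r : ℕ) (f : Polynomial (RSub r)) :
    polyStar c r (f.map (RSub r).subtype) =
      (f.map (hstarHom c r)).map (RSub r).subtype := by
  ext k
  rw [polyStar_coeff, Polynomial.coeff_map, Polynomial.coeff_map, Polynomial.coeff_map]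
  rfl

lemma prod_range_mul_eq {M : Type*} [CommMonoid M] (f : ℕ → M) (A B : ℕ) :
    ∏ k ∈ Finset.range (A * B), f k
      = ∏ i ∈ Finset.range B, ∏ j ∈ Finset.range A, f (i * A + j) := by
  induction B with
  | zero => simp
  | succ B ih =>
    rw [Nat.mul_succ, Finset.prod_range_add, ih, Finset.prod_range_succ]
    congr 1
    refine Finset.prod_congr rfl fun j hj => ?_
    rw [Nat.mul_comm A B]

end Stmt11Aux

open Stmt11Aux

/-- Let `p 0 = 1`, `p 1, …, p l` be positive integers with
`p = p 1 ⋯ p l`, let `φ ∈ K` be `p`-supported and `ζ` a primitive `p`-th root of unity.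
Then for all `0 ≤ m < n ≤ l`,
`f_φ^{[p 0 ⋯ p n]} = ∏_{i=0}^{p (m+1) ⋯ p n − 1} ζ^{i · p 0 ⋯ p m} ⋆_p (f_φ^{[p 0 ⋯ p m]})`,
where `⋆_p` is applied coefficientwise to polynomials in `y`. -/
theorem stmt11 (l : ℕ) (p : ℕ → ℕ) (hp0 : p 0 = 1)
    (hp : ∀ i, 1 ≤ i → i ≤ l → 0 < p i)
    (φ : K) (hφ : RSupported (∏ i ∈ Finset.Icc 1 l, p i) φ)
    (ζ : ℂˣ) (hζ : IsPrimitiveRoot (ζ : ℂ) (∏ i ∈ Finset.Icc 1 l, p i))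
    (m n : ℕ) (hmn : m < n) (hnl : n ≤ l) :
    fPow (∏ i ∈ Finset.Icc 1 l, p i) ζ φ (∏ i ∈ Finset.range (n + 1), p i) =
      ∏ i ∈ Finset.range (∏ t ∈ Finset.Icc (m + 1) n, p t),
        polyStar (ζ ^ (i * ∏ t ∈ Finset.range (m + 1), p t)) (∏ i ∈ Finset.Icc 1 l, p i)
          (fPow (∏ i ∈ Finset.Icc 1 l, p i) ζ φ (∏ t ∈ Finset.range (m + 1), p t)) := by
  classical
  set P := ∏ i ∈ Finset.Icc 1 l, p i with hP
  set A := ∏ t ∈ Finset.range (m + 1), p t with hA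
  set B := ∏ t ∈ Finset.Icc (m + 1) n, p t with hB
  have hAB : (∏ i ∈ Finset.range (n + 1), p i) = A * B := by
    rw [hA, hB, ← Finset.Ico_add_one_right_eq_Icc (m + 1) n, Finset.range_eq_Ico, Finset.range_eq_Ico]
    exact (Finset.prod_Ico_consecutive p (Nat.zero_le (m + 1))
      (Nat.succ_le_succ hmn.le)).symm
  set φel : RSub P := ⟨φ, hφ⟩ with hφel
  set F : ℕ → Polynomial (RSub P) := fun N =>
    ∏ j ∈ Finset.range N, (Polynomial.X - Polynomial.C (hstarHom (ζ ^ j) P φel)) with hF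
  have hf : ∀ N, fPow P ζ φ N = (F N).map (RSub P).subtype := by
    intro N
    rw [hF, fPow, Polynomial.map_prod]
    refine Finset.prod_congr rfl fun j _ => ?_
    rw [Polynomial.map_sub, Polynomial.map_X, Polynomial.map_C]
    rfl
  have key : F (A * B) = ∏ i ∈ Finset.range B, (F A).map (hstarHom (ζ ^ (i * A)) P) := by
    rw [hF]
    beta_reduce
    rw [prod_range_mul_eq (fun k => Polynomial.X - Polynomial.C (hstarHom (ζ ^ k) P φel)) A B]
    refine Finset.prod_congr rfl fun i _ => ?_
    rw [Polynomial.map_prod]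
    refine Finset.prod_congr rfl fun j _ => ?_
    rw [Polynomial.map_sub, Polynomial.map_X, Polynomial.map_C]
    congr 1
    congr 1
    apply Subtype.ext
    show hstar (ζ ^ (i * A + j)) P (φ : K) = hstar (ζ ^ (i * A)) P (hstar (ζ ^ j) P φ)
    rw [hstar_hstar, ← pow_add]
  calc fPow P ζ φ (∏ i ∈ Finset.range (n + 1), p i)
      = (F (A * B)).map (RSub P).subtype := by rw [hAB, hf]
    _ = ∏ i ∈ Finset.range B,
          ((F A).map (hstarHom (ζ ^ (i * A)) P)).map (RSub P).subtype := by
        rw [key, Polynomial.map_prod]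
    _ = ∏ i ∈ Finset.range B, polyStar (ζ ^ (i * A)) P (fPow P ζ φ A) := by
        refine Finset.prod_congr rfl fun i _ => ?_
        rw [hf A, polyStar_map]
end
end
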